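/- arXiv:1503.02500 — 6 statements merged into one kernel-verified Lean document; each statement's English description precedes it below -/
import Mathlib

section
/- Let f : ℝ → ℝ be twice differentiable on an open interval I with f, f', f'' integrable on [a,b] ⊆ I, a < b, and 0 ≤ λ ≤ 1. Define k(t) = t(t-λ)/2 for 0 ≤ t ≤ 1/2 and k(t) = (1-t)(1-λ-t)/2 for 1/2 ≤ t ≤ 1. Then (λ-1) f((a+b)/2) - λ (f(a)+f(b))/2 + (1/(b-a)) ∫_a^b f(x) dx = (b-a)² ∫_0^1 k(t) f''(ta + (1-t)b) dt. -/
open intervalIntegral MeasureTheory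

theorem stmt_1 (f f' f'' : ℝ → ℝ) (I : Set ℝ) (hI : IsOpen I) (a b : ℝ) (hab : a < b)
    (hsub : Set.Icc a b ⊆ I)
    (hdf : ∀ x ∈ I, HasDerivAt f (f' x) x)
    (hdf2 : ∀ x ∈ I, HasDerivAt f' (f'' x) x)
    (hfi : IntervalIntegrable f MeasureTheory.volume a b)
    (hf1i : IntervalIntegrable f' MeasureTheory.volume a b)
    (hf2i : IntervalIntegrable f'' MeasureTheory.volume a b)
    (l : ℝ) (hl : l ∈ Set.Icc (0:ℝ) 1)
    (k : ℝ → ℝ)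
    (hk : ∀ t ∈ Set.Icc (0:ℝ) 1,
      k t = if t ≤ 1/2 then t*(t-l)/2 else (1-t)*(1-l-t)/2) :
    (l-1) * f ((a+b)/2) - l * (f a + f b)/2 + (1/(b-a)) * ∫ x in a..b, f x
    = (b-a)^2 * ∫ t in (0:ℝ)..1, k t * f'' (t*a + (1-t)*b) := by
  have hc : a - b ≠ 0 := by linarith
  set g : ℝ → ℝ := fun t => f ((a-b)*t + b) with hg_def
  set g1 : ℝ → ℝ := fun t => (a-b) * f' ((a-b)*t + b) with hg1_def
  set g2 : ℝ → ℝ := fun t => (a-b) * ((a-b) * f'' ((a-b)*t + b)) with hg2_def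
  -- membership
  have hImem : ∀ t ∈ Set.Icc (0:ℝ) 1, (a-b)*t + b ∈ I := by
    intro t ht
    apply hsub
    constructor
    · nlinarith [ht.1, ht.2]
    · nlinarith [ht.1, ht.2]
  -- derivatives
  have hgd : ∀ t ∈ Set.Icc (0:ℝ) 1, HasDerivAt g (g1 t) t := by
    intro t ht
    have h1 : HasDerivAt (fun s : ℝ => (a-b)*s + b) (a-b) t := by
      simpa using ((hasDerivAt_id t).const_mul (a-b)).add_const b
    have := (hdf _ (hImem t ht)).comp t h1
    simpa [g, g1, mul_comm, Function.comp_def] using this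
  have hg1d : ∀ t ∈ Set.Icc (0:ℝ) 1, HasDerivAt g1 (g2 t) t := by
    intro t ht
    have h1 : HasDerivAt (fun s : ℝ => (a-b)*s + b) (a-b) t := by
      simpa using ((hasDerivAt_id t).const_mul (a-b)).add_const b
    have := ((hdf2 _ (hImem t ht)).comp t h1).const_mul (a-b)
    simpa [g1, g2, mul_comm] using this
  -- integrability
  have hcomp : ∀ F : ℝ → ℝ, IntervalIntegrable F volume a b →
      IntervalIntegrable (fun t => F ((a-b)*t + b)) volume 0 1 := by
    intro F hF
    have h1 := (hF.comp_add_right b).comp_mul_left (c := a-b)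
    rw [div_self hc, sub_self, zero_div] at h1
    exact h1.symm
  have h2i : IntervalIntegrable g2 volume 0 1 := by
    have := ((hcomp f'' hf2i).const_mul (a-b)).const_mul (a-b)
    simpa [g2, mul_assoc] using this
  have h1i : IntervalIntegrable g1 volume 0 1 := by
    have := (hcomp f' hf1i).const_mul (a-b)
    simpa [g1] using this
  have h0i : IntervalIntegrable g volume 0 1 := hcomp f hfi
  have hsub1 : Set.uIcc (0:ℝ) (1/2) ⊆ Set.uIcc (0:ℝ) 1 := by
    rw [Set.uIcc_of_le (by norm_num : (0:ℝ) ≤ 1/2), Set.uIcc_of_le (by norm_num : (0:ℝ) ≤ 1)]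
    exact Set.Icc_subset_Icc le_rfl (by norm_num)
  have hsub2 : Set.uIcc (1/2 : ℝ) 1 ⊆ Set.uIcc (0:ℝ) 1 := by
    rw [Set.uIcc_of_le (by norm_num : (1/2:ℝ) ≤ 1), Set.uIcc_of_le (by norm_num : (0:ℝ) ≤ 1)]
    exact Set.Icc_subset_Icc (by norm_num) le_rfl
  have hmem1 : ∀ t ∈ Set.uIcc (0:ℝ) (1/2), t ∈ Set.Icc (0:ℝ) 1 := by
    intro t ht
    have := hsub1 ht
    rwa [Set.uIcc_of_le (by norm_num : (0:ℝ) ≤ 1)] at this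
  have hmem2 : ∀ t ∈ Set.uIcc (1/2:ℝ) 1, t ∈ Set.Icc (0:ℝ) 1 := by
    intro t ht
    have := hsub2 ht
    rwa [Set.uIcc_of_le (by norm_num : (0:ℝ) ≤ 1)] at this
  -- IBP on [0,1/2]
  have ibp1a : ∫ t in (0:ℝ)..(1/2), (t*(t-l)/2) * g2 t
      = (1/2*(1/2-l)/2) * g1 (1/2) - 0 - ∫ t in (0:ℝ)..(1/2), (t - l/2) * g1 t := by
    have h := integral_mul_deriv_eq_deriv_mul
      (u := fun t => t*(t-l)/2) (u' := fun t => t - l/2) (v := g1) (v' := g2)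
      (a := (0:ℝ)) (b := 1/2)
      (fun t _ => by
        have : HasDerivAt (fun t : ℝ => t*(t-l)/2) ((1*(t-l) + t*1)/2) t :=
          ((hasDerivAt_id t).mul ((hasDerivAt_id t).sub_const l)).div_const 2
        exact this.congr_deriv (by ring))
      (fun t ht => hg1d t (hmem1 t ht))
      ((continuous_id.sub continuous_const).intervalIntegrable _ _)
      (h2i.mono_set hsub1)
    simpa using h
  have ibp1b : ∫ t in (0:ℝ)..(1/2), (t - l/2) * g1 t
      = (1/2 - l/2) * g (1/2) - (0 - l/2) * g 0 - ∫ t in (0:ℝ)..(1/2), g t := by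
    have h := integral_mul_deriv_eq_deriv_mul
      (u := fun t => t - l/2) (u' := fun _ => (1:ℝ)) (v := g) (v' := g1)
      (a := (0:ℝ)) (b := 1/2)
      (fun t _ => (hasDerivAt_id t).sub_const (l/2))
      (fun t ht => hgd t (hmem1 t ht))
      (intervalIntegrable_const)
      (h1i.mono_set hsub1)
    simpa using h
  -- IBP on [1/2,1]
  have ibp2a : ∫ t in (1/2:ℝ)..1, ((1-t)*(1-l-t)/2) * g2 t
      = 0 - (1/2*(1/2-l)/2) * g1 (1/2) - ∫ t in (1/2:ℝ)..1, (t - 1 + l/2) * g1 t := by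
    have h := integral_mul_deriv_eq_deriv_mul
      (u := fun t => (1-t)*(1-l-t)/2) (u' := fun t => t - 1 + l/2) (v := g1) (v' := g2)
      (a := (1/2:ℝ)) (b := 1)
      (fun t _ => by
        have h0 := (((hasDerivAt_const t (1:ℝ)).sub (hasDerivAt_id t)).mul
          ((hasDerivAt_const t (1-l)).sub (hasDerivAt_id t))).div_const 2
        exact h0.congr_deriv (by simp only [Pi.sub_apply, id_eq]; ring))
      (fun t ht => hg1d t (hmem2 t ht))
      (((continuous_id.sub continuous_const).add continuous_const).intervalIntegrable _ _)
      (h2i.mono_set hsub2)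
    rw [h]; ring
  have ibp2b : ∫ t in (1/2:ℝ)..1, (t - 1 + l/2) * g1 t
      = (l/2) * g 1 - (l/2 - 1/2) * g (1/2) - ∫ t in (1/2:ℝ)..1, g t := by
    have h := integral_mul_deriv_eq_deriv_mul
      (u := fun t => t - 1 + l/2) (u' := fun _ => (1:ℝ)) (v := g) (v' := g1)
      (a := (1/2:ℝ)) (b := 1)
      (fun t _ => ((hasDerivAt_id t).sub_const 1).add_const (l/2))
      (fun t ht => hgd t (hmem2 t ht))
      (intervalIntegrable_const)
      (h1i.mono_set hsub2)
    rw [h]; ring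
  -- rewrite integrand of the RHS
  have hrw : ∀ t : ℝ, t*a + (1-t)*b = (a-b)*t + b := fun t => by ring
  have krw : (∫ t in (0:ℝ)..1, k t * f'' (t*a + (1-t)*b))
      = ∫ t in (0:ℝ)..1, k t * f'' ((a-b)*t + b) := by
    congr 1; ext t; rw [hrw]
  -- split
  have hk1 : ∀ t ∈ Set.uIcc (0:ℝ) (1/2), k t = t*(t-l)/2 := by
    intro t ht
    have h1 := hmem1 t ht
    rw [hk t h1, if_pos]
    rw [Set.uIcc_of_le (by norm_num : (0:ℝ) ≤ 1/2)] at ht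
    exact ht.2
  have hk2 : ∀ t ∈ Set.uIcc (1/2:ℝ) 1, k t = (1-t)*(1-l-t)/2 := by
    intro t ht
    have h1 := hmem2 t ht
    rw [Set.uIcc_of_le (by norm_num : (1/2:ℝ) ≤ 1)] at ht
    rw [hk t h1]
    rcases le_or_gt t (1/2) with h | h
    · have : t = 1/2 := le_antisymm h ht.1
      rw [if_pos h, this]; ring
    · rw [if_neg (not_le.mpr h)]
  -- integrands over pieces (k vs g2 form)
  have key1 : ∫ t in (0:ℝ)..(1/2), k t * g2 t = ∫ t in (0:ℝ)..(1/2), (t*(t-l)/2) * g2 t := by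
    apply integral_congr
    intro t ht
    simp only
    rw [hk1 t ht]
  have key2 : ∫ t in (1/2:ℝ)..1, k t * g2 t = ∫ t in (1/2:ℝ)..1, ((1-t)*(1-l-t)/2) * g2 t := by
    apply integral_congr
    intro t ht
    simp only
    rw [hk2 t ht]
  -- k * g2 integrable
  have hkcont : ContinuousOn k (Set.uIcc (0:ℝ) (1/2)) := by
    apply ContinuousOn.congr (f := fun t => t*(t-l)/2)
    · exact ((continuousOn_id.mul (continuousOn_id.sub continuousOn_const)).div_const 2)
    · exact hk1
  have hkcont2 : ContinuousOn k (Set.uIcc (1/2:ℝ) 1) := by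
    apply ContinuousOn.congr (f := fun t => (1-t)*(1-l-t)/2)
    · exact (((continuousOn_const.sub continuousOn_id).mul
        (continuousOn_const.sub continuousOn_id)).div_const 2)
    · exact hk2
  have hint1 : IntervalIntegrable (fun t => k t * g2 t) volume 0 (1/2) :=
    (h2i.mono_set hsub1).continuousOn_mul hkcont
  have hint2 : IntervalIntegrable (fun t => k t * g2 t) volume (1/2) 1 :=
    (h2i.mono_set hsub2).continuousOn_mul hkcont2
  have hsplit : ∫ t in (0:ℝ)..1, k t * g2 t
      = (∫ t in (0:ℝ)..(1/2), k t * g2 t) + ∫ t in (1/2:ℝ)..1, k t * g2 t :=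
    (integral_add_adjacent_intervals hint1 hint2).symm
  -- relate target integral to g2 integral
  have hfac : (b-a)^2 * ∫ t in (0:ℝ)..1, k t * f'' ((a-b)*t + b)
      = ∫ t in (0:ℝ)..1, k t * g2 t := by
    rw [← intervalIntegral.integral_const_mul]
    congr 1; ext t
    simp only [g2]; ring
  -- integral of g over [0,1]
  have hgint : ∫ t in (0:ℝ)..1, g t = (1/(b-a)) * ∫ x in a..b, f x := by
    have h := integral_comp_mul_add (a := (0:ℝ)) (b := 1) (f := f) (c := a-b) hc b
    simp only [mul_zero, zero_add, mul_one] at h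
    have hba : b - a ≠ 0 := by linarith
    rw [hg_def]
    rw [h, show a - b + b = a from by ring, integral_symm a b, smul_eq_mul]
    field_simp
    ring
  have hgsplit : (∫ t in (0:ℝ)..(1/2), g t) + (∫ t in (1/2:ℝ)..1, g t) = ∫ t in (0:ℝ)..1, g t :=
    integral_add_adjacent_intervals (h0i.mono_set hsub1) (h0i.mono_set hsub2)
  -- values of g
  have hg0 : g 0 = f b := by simp [g]
  have hg1v : g 1 = f a := by simp [g]
  have hgh : g (1/2) = f ((a+b)/2) := by
    simp only [g]
    norm_num
    ring_nf
  -- assemble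
  rw [krw, hfac, hsplit, key1, key2, ibp1a, ibp2a, ibp1b, ibp2b]
  rw [hg0, hg1v, hgh] at *
  have hgs := hgsplit
  rw [hgint] at hgs
  nlinarith [hgs]
end

section
/- Let f : ℝ → ℝ be twice differentiable on an open interval containing [a,b], a < b, with f, f', f'' integrable, and let p, q > 1 with 1/p + 1/q = 1. If |f''|^q is convex on [a,b], then |f((a+b)/2) - (1/(b-a))∫_a^b f(x)dx| ≤ (b-a)² (1/(2^{2p+1}(p+1)))^{1/p} { [ |f''(b)|^q/(2^{q+2}(q+2)) + B(1/2; q+1,2)|f''(a)|^q ]^{1/q} + [ B(1/2; q+1,2)|f''(b)|^q + |f''(a)|^q/(2^{q+2}(q+2)) ]^{1/q} }, where B(x; s, t) is the incomplete Beta function. -/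
open Real MeasureTheory intervalIntegral

lemma coef_eq {h p q : ℝ} (hh : 0 < h) (hp : 1 < p) (hq : 1 < q) (hpq : 1/p + 1/q = 1) :
    (1/h) * ((1/2) * ((((h/2)^(p+1))/(p+1))^(1/p) * (h^(q+1))^(1/q)))
      = h^(2:ℕ) * (1/(2^(2*p+1)*(p+1)))^(1/p) := by
  have hp0 : (0:ℝ) < p := by linarith
  have hq0 : (0:ℝ) < q := by linarith
  have hp1 : (0:ℝ) < p + 1 := by linarith
  have h2 : (0:ℝ) < 2 := by norm_num
  have hpq' : q + p = p * q := by field_simp at hpq; linarith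
  have e1 : ((h/2)^(p+1)/(p+1))^(1/p)
      = h^((p+1)/p) / (2^((p+1)/p) * (p+1)^(1/p)) := by
    rw [div_rpow (by positivity) hp1.le, div_rpow hh.le h2.le,
      div_rpow (by positivity) (by positivity), ← Real.rpow_mul hh.le,
      ← Real.rpow_mul h2.le, mul_one_div, div_div]
  have e2 : (h^(q+1))^(1/q) = h^((q+1)/q) := by
    rw [← Real.rpow_mul hh.le, mul_one_div]
  have e3 : (1/(2^(2*p+1)*(p+1)))^(1/p) = 1 / (2^((2*p+1)/p) * (p+1)^(1/p)) := by
    rw [div_rpow (by norm_num) (by positivity), mul_rpow (by positivity) hp1.le,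
      ← Real.rpow_mul h2.le, mul_one_div, Real.one_rpow]
  rw [e1, e2, e3]
  have e4 : h^((p+1)/p) * h^((q+1)/q) = h^(2:ℕ) * h := by
    rw [← Real.rpow_add hh]
    have h3 : (p+1)/p + (q+1)/q = 3 := by field_simp; linarith
    rw [h3, show (3:ℝ) = ((3:ℕ):ℝ) by norm_num, Real.rpow_natCast]
    ring
  have e5 : (2:ℝ)^((2*p+1)/p) = 2 * 2^((p+1)/p) := by
    rw [show (2*p+1)/p = 1 + (p+1)/p by field_simp; ring, Real.rpow_add h2, Real.rpow_one]
  rw [e5]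
  have hpos1 : (0:ℝ) < 2^((p+1)/p) := by positivity
  have hpos2 : (0:ℝ) < (p+1)^(1/p) := by positivity
  field_simp
  rw [e4]; ring


lemma betaVal {q : ℝ} (hq : 0 < q) :
    (∫ u in (0:ℝ)..(1/2), u^q * (1-u)) = (1/2)^(q+1)/(q+1) - (1/2)^(q+2)/(q+2) := by
  have h1 : (∫ u in (0:ℝ)..(1/2), u^q * (1-u)) = ∫ u in (0:ℝ)..(1/2), (u^q - u^(q+1)) := by
    apply intervalIntegral.integral_congr
    intro u hu
    rw [Set.uIcc_of_le (by norm_num)] at hu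
    simp only
    rcases eq_or_lt_of_le hu.1 with h | h
    · rw [← h, Real.zero_rpow (by positivity : q ≠ 0),
        Real.zero_rpow (by positivity : q + 1 ≠ 0)]
      ring
    · rw [Real.rpow_add_one h.ne']; ring
  rw [h1, intervalIntegral.integral_sub (intervalIntegral.intervalIntegrable_rpow' (by linarith))
    (intervalIntegral.intervalIntegrable_rpow' (by linarith)),
    integral_rpow (Or.inl (by linarith)), integral_rpow (Or.inl (by linarith)),
    Real.zero_rpow (by positivity : q + 1 ≠ 0), Real.zero_rpow (by positivity : q + 1 + 1 ≠ 0)]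
  rw [show q + 1 + 1 = q + 2 by ring]
  ring


lemma piece_bound (p q : ℝ) (hp : 1 < p) (hq : 1 < q) (hpq : 1/p + 1/q = 1)
    (a b : ℝ) (hab : a < b) (g : ℝ → ℝ)
    (hgm : AEStronglyMeasurable g (volume.restrict (Set.Ioc a ((a+b)/2))))
    (hg0 : ∀ x, 0 ≤ g x) (A B M : ℝ) (hA : 0 ≤ A) (hB : 0 ≤ B)
    (hbound : ∀ x ∈ Set.Ioc a ((a+b)/2),
      g x ^ q ≤ ((b-x)/(b-a))*A + ((x-a)/(b-a))*B)
    (hM : ∀ x ∈ Set.Ioc a ((a+b)/2), g x ≤ M) :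
    ∫ x in a..(a+b)/2, (x-a)^(2:ℕ)/2 * g x
      ≤ (1/2) * (((((b-a)/2)^(p+1))/(p+1))^(1/p)
          * ((b-a)^(q+1) * (B/(2^(q+2)*(q+2))
              + (∫ u in (0:ℝ)..(1/2), u^q * (1-u)) * A))^(1/q)) := by
  set m : ℝ := (a+b)/2 with hm
  have hh : (0:ℝ) < b - a := by linarith
  have ham' : a < (a+b)/2 := by linarith
  have hmb' : (a+b)/2 < b := by linarith
  have ham : a < m := by rw [hm]; linarith
  have hma : m - a = (b-a)/2 := by rw [hm]; ring
  have hq0 : (0:ℝ) < q := by linarith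
  have hp0 : (0:ℝ) < p := by linarith
  set μ : Measure ℝ := volume.restrict (Set.Ioc a m) with hμ
  haveI : IsFiniteMeasure μ := by
    constructor
    rw [hμ, Measure.restrict_apply MeasurableSet.univ, Set.univ_inter]
    exact measure_Ioc_lt_top
  have hM0 : 0 ≤ M := le_trans (hg0 m) (hM m ⟨ham, le_refl m⟩)
  -- step 1: rewrite the integral
  have step1 : ∫ x in a..m, (x-a)^(2:ℕ)/2 * g x
      = (1/2) * ∫ x, (x - a) * ((x - a) * g x) ∂μ := by
    rw [integral_of_le ham.le, ← MeasureTheory.integral_const_mul]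
    apply setIntegral_congr_fun measurableSet_Ioc
    intro x _
    ring
  -- Hölder
  have hconj : p.HolderConjugate q := Real.holderConjugate_iff.mpr ⟨hp, by rw [← one_div, ← one_div]; exact hpq⟩
  have hFc : Continuous fun x : ℝ => x - a := by fun_prop
  have hF : MemLp (fun x : ℝ => x - a) (ENNReal.ofReal p) μ := by
    apply MemLp.of_bound hFc.aestronglyMeasurable (m - a)
    filter_upwards [ae_restrict_mem measurableSet_Ioc] with x hx
    rw [Real.norm_eq_abs, abs_of_nonneg (by linarith [hx.1])]
    linarith [hx.2]
  have hGm : AEStronglyMeasurable (fun x => (x - a) * g x) μ :=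
    hFc.aestronglyMeasurable.mul hgm
  have hG : MemLp (fun x => (x - a) * g x) (ENNReal.ofReal q) μ := by
    apply MemLp.of_bound hGm ((m - a) * M)
    filter_upwards [ae_restrict_mem measurableSet_Ioc] with x hx
    rw [Real.norm_eq_abs, abs_of_nonneg (mul_nonneg (by linarith [hx.1]) (hg0 x))]
    exact mul_le_mul (by linarith [hx.2]) (hM x hx) (hg0 x) (by linarith)
  have hF0 : 0 ≤ᵐ[μ] fun x : ℝ => x - a := by
    filter_upwards [ae_restrict_mem measurableSet_Ioc] with x hx
    simp only [Pi.zero_apply]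
    linarith [hx.1]
  have hG0 : 0 ≤ᵐ[μ] fun x => (x - a) * g x := by
    filter_upwards [ae_restrict_mem measurableSet_Ioc] with x hx
    simp only [Pi.zero_apply]
    exact mul_nonneg (by linarith [hx.1]) (hg0 x)
  have holder := MeasureTheory.integral_mul_le_Lp_mul_Lq_of_nonneg hconj hF0 hG0 hF hG
  -- interval power integrals
  have Ir : ∀ r : ℝ, 0 < r → (∫ x in a..m, (x-a)^r) = ((b-a)/2)^(r+1)/(r+1) := by
    intro r hr
    have hc := intervalIntegral.integral_comp_sub_right (fun s : ℝ => s^r) a (a := a) (b := m)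
    rw [hc, sub_self, hma, integral_rpow (Or.inl (by linarith)),
      Real.zero_rpow (by positivity : r + 1 ≠ 0), sub_zero]
  -- the p-integral
  have hIp : (∫ x, (x - a)^p ∂μ) = ((b-a)/2)^(p+1)/(p+1) := by
    rw [hμ, ← integral_of_le ham.le]
    exact Ir p hp0
  -- continuity of rpow kernels
  have contr : ∀ r : ℝ, 0 < r → Continuous fun x : ℝ => (x - a)^r := by
    intro r hr
    fun_prop (disch := intros; first | positivity | simp [hr.le])
  -- the q-integral bound
  have contq : Continuous fun y : ℝ => y ^ q := by
    fun_prop (disch := intros; first | positivity | simp [hq0.le])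
  have hIq : (∫ x, ((x - a) * g x)^q ∂μ)
      ≤ (b-a)^(q+1) * (B/(2^(q+2)*(q+2)) + (∫ u in (0:ℝ)..(1/2), u^q * (1-u)) * A) := by
    have key1 : (∫ x, ((x - a) * g x)^q ∂μ)
        ≤ ∫ x, (x-a)^q * (((b-x)/(b-a))*A + ((x-a)/(b-a))*B) ∂μ := by
      refine setIntegral_mono_on ?_ ?_ measurableSet_Ioc ?_
      · apply memLp_one_iff_integrable.mp
        apply MemLp.of_bound (contq.comp_aestronglyMeasurable hGm) (((m-a)*M)^q)
        filter_upwards [ae_restrict_mem measurableSet_Ioc] with x hx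
        have h0 : 0 ≤ (x - a) * g x := mul_nonneg (by linarith [hx.1]) (hg0 x)
        rw [Real.norm_eq_abs, abs_of_nonneg (Real.rpow_nonneg h0 q)]
        exact Real.rpow_le_rpow h0
          (mul_le_mul (by linarith [hx.2]) (hM x hx) (hg0 x) (by linarith)) hq0.le
      · exact ((contr q hq0).mul (by fun_prop)).integrableOn_Ioc
      · intro x hx
        rw [Real.mul_rpow (by linarith [hx.1]) (hg0 x)]
        exact mul_le_mul_of_nonneg_left (hbound x hx) (Real.rpow_nonneg (by linarith [hx.1]) q)
    have key2 : (∫ x, (x-a)^q * (((b-x)/(b-a))*A + ((x-a)/(b-a))*B) ∂μ)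
        = (b-a)^(q+1) * (B/(2^(q+2)*(q+2)) + (∫ u in (0:ℝ)..(1/2), u^q * (1-u)) * A) := by
      rw [hμ, ← integral_of_le ham.le]
      have e : Set.EqOn (fun x => (x-a)^q * (((b-x)/(b-a))*A + ((x-a)/(b-a))*B))
          (fun x => A * (x-a)^q + ((B-A)/(b-a)) * (x-a)^(q+1)) (Set.uIcc a m) := by
        intro x hx
        rw [Set.uIcc_of_le ham.le] at hx
        simp only
        rcases eq_or_lt_of_le hx.1 with h | h
        · rw [← h, sub_self, Real.zero_rpow (ne_of_gt hq0),
            Real.zero_rpow (by positivity : q+1 ≠ 0)]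
          ring
        · rw [Real.rpow_add_one (by rw [sub_ne_zero]; exact h.ne' : x - a ≠ 0)]
          field_simp
          ring
      rw [intervalIntegral.integral_congr e,
        intervalIntegral.integral_add (f := fun x => A * (x-a)^q)
          (g := fun x => ((B-A)/(b-a)) * (x-a)^(q+1))
          ((continuous_const.mul (contr q hq0)).intervalIntegrable a m)
          ((continuous_const.mul (contr (q+1) (by linarith))).intervalIntegrable a m),
        intervalIntegral.integral_const_mul, intervalIntegral.integral_const_mul,
        Ir q hq0, Ir (q+1) (by linarith), betaVal hq0]
      have d1 : ((b-a)/2)^(q+1) = (b-a)^(q+1) * (1/2)^(q+1) := by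
        rw [show (b-a)/2 = (b-a)*(1/2) by ring, Real.mul_rpow hh.le (by norm_num)]
      have d2 : ((b-a)/2)^(q+1+1) = ((b-a)^(q+1) * (b-a)) * ((1/2)^(q+1) * (1/2)) := by
        rw [show (b-a)/2 = (b-a)*(1/2) by ring, Real.mul_rpow hh.le (by norm_num),
          Real.rpow_add_one hh.ne', Real.rpow_add_one (by norm_num : (1:ℝ)/2 ≠ 0)]
      have d3 : ((1:ℝ)/2)^(q+1) = (2^(q+1))⁻¹ := by
        rw [one_div, Real.inv_rpow (by norm_num)]
      have d4 : ((1:ℝ)/2)^(q+2) = (2^(q+2))⁻¹ := by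
        rw [one_div, Real.inv_rpow (by norm_num)]
      have d5 : (2:ℝ)^(q+2) = 2^(q+1) * 2 := by
        rw [show q+2 = (q+1)+1 by ring, Real.rpow_add_one (by norm_num : (2:ℝ) ≠ 0)]
      rw [d2, d1, d3, d4, d5]
      have p1 : ((2:ℝ)^(q+1)) ≠ 0 := by positivity
      have hq1 : q + 1 ≠ 0 := by positivity
      have hq2 : q + 1 + 1 ≠ 0 := by positivity
      field_simp
      ring
    exact key1.trans (le_of_eq key2)
  have hq_int_nonneg : 0 ≤ ∫ x, ((x - a) * g x)^q ∂μ := by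
    rw [hμ]
    apply setIntegral_nonneg measurableSet_Ioc
    intro x hx
    exact Real.rpow_nonneg (mul_nonneg (by linarith [hx.1]) (hg0 x)) q
  rw [step1]
  calc (1/2) * ∫ x, (x - a) * ((x - a) * g x) ∂μ
      ≤ (1/2) * ((((b-a)/2)^(p+1)/(p+1))^(1/p) * (∫ x, ((x - a) * g x)^q ∂μ)^(1/q)) := by
        rw [← hIp]
        exact mul_le_mul_of_nonneg_left holder (by norm_num)
    _ ≤ _ := by
        apply mul_le_mul_of_nonneg_left _ (by norm_num)
        apply mul_le_mul_of_nonneg_left _ (by positivity)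
        exact Real.rpow_le_rpow hq_int_nonneg hIq (by positivity)

set_option maxHeartbeats 1000000 in
theorem stmt_14 (f f' f'' : ℝ → ℝ) (I : Set ℝ) (hI : IsOpen I) (a b : ℝ) (hab : a < b)
    (hsub : Set.Icc a b ⊆ I)
    (hdf : ∀ x ∈ I, HasDerivAt f (f' x) x)
    (hdf2 : ∀ x ∈ I, HasDerivAt f' (f'' x) x)
    (hfi : IntervalIntegrable f MeasureTheory.volume a b)
    (hf1i : IntervalIntegrable f' MeasureTheory.volume a b)
    (hf2i : IntervalIntegrable f'' MeasureTheory.volume a b)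
    (p q : ℝ) (hp : 1 < p) (hq : 1 < q) (hpq : 1/p + 1/q = 1)
    (hconv : ConvexOn ℝ (Set.Icc a b) (fun x => |f'' x| ^ q)) :
    |f ((a+b)/2) - (1/(b-a)) * ∫ x in a..b, f x|
    ≤ (b-a)^2 * (1 / (2 ^ (2*p+1) * (p+1))) ^ (1/p) *
      (((|f'' b| ^ q) / (2 ^ (q+2) * (q+2))
        + (∫ u in (0:ℝ)..(1/2), u ^ q * (1-u)) * |f'' a| ^ q) ^ (1/q)
      + ((∫ u in (0:ℝ)..(1/2), u ^ q * (1-u)) * |f'' b| ^ q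
        + (|f'' a| ^ q) / (2 ^ (q+2) * (q+2))) ^ (1/q)) := by
  have hh : (0:ℝ) < b - a := by linarith
  set m : ℝ := (a+b)/2 with hm
  have ham' : a < (a+b)/2 := by linarith
  have hmb' : (a+b)/2 < b := by linarith
  have ham : a < m := by rw [hm]; linarith
  have hmb : m < b := by rw [hm]; linarith
  have hq0 : (0:ℝ) < q := by linarith
  have hIm : ∀ x, a ≤ x → x ≤ b → x ∈ I := fun x h1 h2 => hsub ⟨h1, h2⟩
  have sub1 : Set.uIcc a m ⊆ Set.uIcc a b := by
    rw [Set.uIcc_of_le ham.le, Set.uIcc_of_le hab.le]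
    exact Set.Icc_subset_Icc le_rfl hmb.le
  have sub2 : Set.uIcc m b ⊆ Set.uIcc a b := by
    rw [Set.uIcc_of_le hmb.le, Set.uIcc_of_le hab.le]
    exact Set.Icc_subset_Icc ham.le le_rfl
  have hfi1 : IntervalIntegrable f MeasureTheory.volume a m := hfi.mono_set sub1
  have hfi2 : IntervalIntegrable f MeasureTheory.volume m b := hfi.mono_set sub2
  have int1 : IntervalIntegrable (fun x => (x-a)^(2:ℕ)/2 * f'' x) MeasureTheory.volume a m :=
    (hf2i.mono_set sub1).continuousOn_mul (by fun_prop)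
  have int2 : IntervalIntegrable (fun x => (x-b)^(2:ℕ)/2 * f'' x) MeasureTheory.volume m b :=
    (hf2i.mono_set sub2).continuousOn_mul (by fun_prop)
  -- FTC on the two halves
  have FTC1 : ∫ x in a..m, ((x-a)^(2:ℕ)/2 * f'' x - f x)
      = ((m-a)^(2:ℕ)/2 * f' m - (m-a) * f m) - ((a-a)^(2:ℕ)/2 * f' a - (a-a) * f a) := by
    apply intervalIntegral.integral_eq_sub_of_hasDerivAt
      (f := fun y => (y-a)^(2:ℕ)/2 * f' y - (y-a) * f y)
    · intro x hx
      have hxI : x ∈ I := by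
        rw [Set.uIcc_of_le ham.le] at hx
        exact hIm x hx.1 (le_trans hx.2 hmb.le)
      have d1 : HasDerivAt (fun y : ℝ => (y-a)^(2:ℕ)/2) (x-a) x := by
        have hd := (((hasDerivAt_id x).sub_const a).pow 2).div_const 2
        refine hd.congr_deriv ?_
        simp
      have d2 : HasDerivAt (fun y : ℝ => y - a) 1 x := (hasDerivAt_id x).sub_const a
      have hd := (d1.mul (hdf2 x hxI)).sub (d2.mul (hdf x hxI))
      refine hd.congr_deriv ?_
      ring
    · exact int1.sub hfi1
  have FTC2 : ∫ x in m..b, ((x-b)^(2:ℕ)/2 * f'' x - f x)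
      = ((b-b)^(2:ℕ)/2 * f' b - (b-b) * f b) - ((m-b)^(2:ℕ)/2 * f' m - (m-b) * f m) := by
    apply intervalIntegral.integral_eq_sub_of_hasDerivAt
      (f := fun y => (y-b)^(2:ℕ)/2 * f' y - (y-b) * f y)
    · intro x hx
      have hxI : x ∈ I := by
        rw [Set.uIcc_of_le hmb.le] at hx
        exact hIm x (le_trans ham.le hx.1) hx.2
      have d1 : HasDerivAt (fun y : ℝ => (y-b)^(2:ℕ)/2) (x-b) x := by
        have hd := (((hasDerivAt_id x).sub_const b).pow 2).div_const 2
        refine hd.congr_deriv ?_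
        simp
      have d2 : HasDerivAt (fun y : ℝ => y - b) 1 x := (hasDerivAt_id x).sub_const b
      have hd := (d1.mul (hdf2 x hxI)).sub (d2.mul (hdf x hxI))
      refine hd.congr_deriv ?_
      ring
    · exact int2.sub hfi2
  rw [intervalIntegral.integral_sub int1 hfi1] at FTC1
  rw [intervalIntegral.integral_sub int2 hfi2] at FTC2
  have split : (∫ x in a..m, f x) + ∫ x in m..b, f x = ∫ x in a..b, f x :=
    intervalIntegral.integral_add_adjacent_intervals hfi1 hfi2
  have key : f m - (1/(b-a)) * ∫ x in a..b, f x
      = -(1/(b-a)) * ((∫ x in a..m, (x-a)^(2:ℕ)/2 * f'' x)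
          + ∫ x in m..b, (x-b)^(2:ℕ)/2 * f'' x) := by
    have e1 : (∫ x in a..m, (x-a)^(2:ℕ)/2 * f'' x)
        = ((m-a)^(2:ℕ)/2 * f' m - (m-a) * f m) - ((a-a)^(2:ℕ)/2 * f' a - (a-a) * f a)
          + ∫ x in a..m, f x := by linarith [FTC1]
    have e2 : (∫ x in m..b, (x-b)^(2:ℕ)/2 * f'' x)
        = ((b-b)^(2:ℕ)/2 * f' b - (b-b) * f b) - ((m-b)^(2:ℕ)/2 * f' m - (m-b) * f m)
          + ∫ x in m..b, f x := by linarith [FTC2]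
    rw [e1, e2, ← split]
    simp only [hm]
    field_simp
    ring
  -- absolute value bounds
  have hQ1 : |∫ x in a..m, (x-a)^(2:ℕ)/2 * f'' x|
      ≤ ∫ x in a..m, (x-a)^(2:ℕ)/2 * |f'' x| := by
    refine le_trans (intervalIntegral.abs_integral_le_integral_abs ham.le) (le_of_eq ?_)
    apply intervalIntegral.integral_congr
    intro x _
    simp only
    rw [abs_mul, abs_of_nonneg (by positivity : (0:ℝ) ≤ (x-a)^(2:ℕ)/2)]
  have hQ2 : |∫ x in m..b, (x-b)^(2:ℕ)/2 * f'' x|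
      ≤ ∫ x in m..b, (b-x)^(2:ℕ)/2 * |f'' x| := by
    refine le_trans (intervalIntegral.abs_integral_le_integral_abs hmb.le) (le_of_eq ?_)
    apply intervalIntegral.integral_congr
    intro x _
    simp only
    rw [abs_mul, abs_of_nonneg (by positivity : (0:ℝ) ≤ (x-b)^(2:ℕ)/2),
      show ((x-b)^(2:ℕ)/2 : ℝ) = (b-x)^(2:ℕ)/2 by ring]
  -- convexity bounds
  have hA : 0 ≤ |f'' a| ^ q := Real.rpow_nonneg (abs_nonneg _) q
  have hB : 0 ≤ |f'' b| ^ q := Real.rpow_nonneg (abs_nonneg _) q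
  have hconvb : ∀ x ∈ Set.Icc a b, |f'' x| ^ q
      ≤ ((b-x)/(b-a)) * |f'' a| ^ q + ((x-a)/(b-a)) * |f'' b| ^ q := by
    intro x hx
    have h1 : 0 ≤ (b-x)/(b-a) := div_nonneg (by linarith [hx.2]) hh.le
    have h2 : 0 ≤ (x-a)/(b-a) := div_nonneg (by linarith [hx.1]) hh.le
    have h3 : (b-x)/(b-a) + (x-a)/(b-a) = 1 := by field_simp; ring
    have hc := hconv.2 (Set.left_mem_Icc.mpr hab.le) (Set.right_mem_Icc.mpr hab.le) h1 h2 h3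
    simp only [smul_eq_mul] at hc
    have hxeq : ((b-x)/(b-a)) * a + ((x-a)/(b-a)) * b = x := by field_simp; ring
    rw [hxeq] at hc
    exact hc
  have hMax : ∀ x ∈ Set.Icc a b, |f'' x| ≤ (max (|f'' a| ^ q) (|f'' b| ^ q)) ^ (1/q) := by
    intro x hx
    have h1 : |f'' x| ^ q ≤ max (|f'' a| ^ q) (|f'' b| ^ q) :=
      hconv.le_on_segment (Set.left_mem_Icc.mpr hab.le) (Set.right_mem_Icc.mpr hab.le)
        (by rwa [segment_eq_Icc hab.le])
    calc |f'' x| = (|f'' x| ^ q) ^ (1/q) := by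
          rw [← Real.rpow_mul (abs_nonneg _), mul_one_div, div_self hq0.ne', Real.rpow_one]
      _ ≤ _ := Real.rpow_le_rpow (Real.rpow_nonneg (abs_nonneg _) q) h1 (by positivity)
  -- measurability
  have hmeas : MeasureTheory.AEStronglyMeasurable (fun x => |f'' x|)
      (MeasureTheory.volume.restrict (Set.Ioc a b)) := by
    simpa [Real.norm_eq_abs] using hf2i.1.aestronglyMeasurable.norm
  have hgm1 : MeasureTheory.AEStronglyMeasurable (fun x => |f'' x|)
      (MeasureTheory.volume.restrict (Set.Ioc a ((a+b)/2))) :=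
    hmeas.mono_measure (MeasureTheory.Measure.restrict_mono
      (Set.Ioc_subset_Ioc le_rfl (by rw [← hm]; exact hmb.le)) le_rfl)
  have pb1 := piece_bound p q hp hq hpq a b hab (fun x => |f'' x|) hgm1
    (fun x => abs_nonneg _) (|f'' a| ^ q) (|f'' b| ^ q)
    ((max (|f'' a| ^ q) (|f'' b| ^ q)) ^ (1/q)) hA hB
    (fun x hx => hconvb x ⟨hx.1.le, by rw [← hm] at hx; exact le_trans hx.2 hmb.le⟩)
    (fun x hx => hMax x ⟨hx.1.le, by rw [← hm] at hx; exact le_trans hx.2 hmb.le⟩)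
  -- reflection for the second piece
  have refl_eq : (∫ x in m..b, (b-x)^(2:ℕ)/2 * |f'' x|)
      = ∫ y in a..m, (y-a)^(2:ℕ)/2 * |f'' (a+b-y)| := by
    have hc := intervalIntegral.integral_comp_sub_left
      (a := a) (b := m) (fun x => (b-x)^(2:ℕ)/2 * |f'' x|) (a+b)
    rw [show a+b-m = m by rw [hm]; ring, show a+b-a = b by ring] at hc
    rw [← hc]
    apply intervalIntegral.integral_congr
    intro y _
    simp only
    ring_nf
  have hgm2 : MeasureTheory.AEStronglyMeasurable (fun y => |f'' (a+b-y)|)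
      (MeasureTheory.volume.restrict (Set.Ioc a ((a+b)/2))) := by
    have hmp : MeasureTheory.MeasurePreserving (fun y : ℝ => a+b-y)
        (MeasureTheory.volume.restrict (Set.Ioc a ((a+b)/2)))
        (MeasureTheory.volume.restrict (Set.Ico ((a+b)/2) b)) := by
      have h0 := MeasureTheory.Measure.measurePreserving_sub_left
        (MeasureTheory.volume : MeasureTheory.Measure ℝ) (a+b)
      have hpre : (fun y : ℝ => a+b-y) ⁻¹' (Set.Ico ((a+b)/2) b) = Set.Ioc a ((a+b)/2) := by
        ext y
        simp only [Set.mem_preimage, Set.mem_Ico, Set.mem_Ioc]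
        constructor <;> intro hy <;> constructor <;> linarith [hy.1, hy.2]
      have := h0.restrict_preimage (s := Set.Ico ((a+b)/2) b) measurableSet_Ico
      rwa [hpre] at this
    have hsub' : Set.Ico ((a+b)/2) b ⊆ Set.Ioc a b := by
      intro x hx
      exact ⟨by linarith [hx.1], hx.2.le⟩
    have hm2 : MeasureTheory.AEStronglyMeasurable (fun x => |f'' x|)
        (MeasureTheory.volume.restrict (Set.Ico ((a+b)/2) b)) :=
      hmeas.mono_measure (MeasureTheory.Measure.restrict_mono hsub' le_rfl)
    exact hm2.comp_measurePreserving hmp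
  have pb2 := piece_bound p q hp hq hpq a b hab (fun y => |f'' (a+b-y)|) hgm2
    (fun x => abs_nonneg _) (|f'' b| ^ q) (|f'' a| ^ q)
    ((max (|f'' a| ^ q) (|f'' b| ^ q)) ^ (1/q)) hB hA
    (by
      intro y hy
      rw [← hm] at hy
      have hz : a+b-y ∈ Set.Icc a b := ⟨by linarith [hy.2], by linarith [hy.1]⟩
      have := hconvb (a+b-y) hz
      calc |f'' (a+b-y)| ^ q
          ≤ ((b-(a+b-y))/(b-a)) * |f'' a| ^ q + (((a+b-y)-a)/(b-a)) * |f'' b| ^ q := this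
        _ = ((b-y)/(b-a)) * |f'' b| ^ q + ((y-a)/(b-a)) * |f'' a| ^ q := by ring)
    (by
      intro y hy
      rw [← hm] at hy
      exact hMax (a+b-y) ⟨by linarith [hy.2], by linarith [hy.1]⟩)
  rw [← hm] at pb1 pb2
  rw [← refl_eq] at pb2
  -- nonnegativity facts
  have hBeta0 : 0 ≤ ∫ u in (0:ℝ)..(1/2), u ^ q * (1-u) := by
    apply intervalIntegral.integral_nonneg (by norm_num)
    intro u hu
    exact mul_nonneg (Real.rpow_nonneg hu.1 q) (by linarith [hu.2])
  have hT : (0:ℝ) < 2 ^ (q+2) * (q+2) := by positivity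
  have hbr1 : 0 ≤ (|f'' b| ^ q) / (2 ^ (q+2) * (q+2))
      + (∫ u in (0:ℝ)..(1/2), u ^ q * (1-u)) * |f'' a| ^ q :=
    add_nonneg (div_nonneg hB hT.le) (mul_nonneg hBeta0 hA)
  have hbr2 : 0 ≤ (|f'' a| ^ q) / (2 ^ (q+2) * (q+2))
      + (∫ u in (0:ℝ)..(1/2), u ^ q * (1-u)) * |f'' b| ^ q :=
    add_nonneg (div_nonneg hA hT.le) (mul_nonneg hBeta0 hB)
  -- split the rpow of products
  have er : ∀ br : ℝ, 0 ≤ br → ((b-a)^(q+1) * br)^(1/q) = ((b-a)^(q+1))^(1/q) * br^(1/q) :=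
    fun br hbr => Real.mul_rpow (Real.rpow_nonneg hh.le _) hbr
  rw [er _ hbr1] at pb1
  rw [er _ hbr2] at pb2
  -- assemble
  have step : |f m - (1/(b-a)) * ∫ x in a..b, f x|
      ≤ (1/(b-a)) * ((∫ x in a..m, (x-a)^(2:ℕ)/2 * |f'' x|)
          + ∫ x in m..b, (b-x)^(2:ℕ)/2 * |f'' x|) := by
    rw [key, abs_mul, abs_neg, abs_of_nonneg (by positivity : (0:ℝ) ≤ 1/(b-a))]
    exact mul_le_mul_of_nonneg_left
      ((abs_add_le _ _).trans (add_le_add hQ1 hQ2)) (by positivity)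
  have ecoef := coef_eq hh hp hq hpq
  calc |f m - (1/(b-a)) * ∫ x in a..b, f x|
      ≤ (1/(b-a)) * ((∫ x in a..m, (x-a)^(2:ℕ)/2 * |f'' x|)
          + ∫ x in m..b, (b-x)^(2:ℕ)/2 * |f'' x|) := step
    _ ≤ (1/(b-a)) * ((1/2) * (((((b-a)/2)^(p+1))/(p+1))^(1/p)
            * (((b-a)^(q+1))^(1/q) * ((|f'' b| ^ q) / (2 ^ (q+2) * (q+2))
              + (∫ u in (0:ℝ)..(1/2), u ^ q * (1-u)) * |f'' a| ^ q)^(1/q)))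
        + (1/2) * (((((b-a)/2)^(p+1))/(p+1))^(1/p)
            * (((b-a)^(q+1))^(1/q) * ((|f'' a| ^ q) / (2 ^ (q+2) * (q+2))
              + (∫ u in (0:ℝ)..(1/2), u ^ q * (1-u)) * |f'' b| ^ q)^(1/q)))) :=
        mul_le_mul_of_nonneg_left (add_le_add pb1 pb2) (by positivity)
    _ = (b-a)^2 * (1 / (2 ^ (2*p+1) * (p+1))) ^ (1/p) *
        (((|f'' b| ^ q) / (2 ^ (q+2) * (q+2))
          + (∫ u in (0:ℝ)..(1/2), u ^ q * (1-u)) * |f'' a| ^ q) ^ (1/q)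
        + ((∫ u in (0:ℝ)..(1/2), u ^ q * (1-u)) * |f'' b| ^ q
          + (|f'' a| ^ q) / (2 ^ (q+2) * (q+2))) ^ (1/q)) := by
        rw [show (∫ u in (0:ℝ)..(1/2), u ^ q * (1-u)) * |f'' b| ^ q
            + (|f'' a| ^ q) / (2 ^ (q+2) * (q+2))
            = (|f'' a| ^ q) / (2 ^ (q+2) * (q+2))
            + (∫ u in (0:ℝ)..(1/2), u ^ q * (1-u)) * |f'' b| ^ q by ring]
        linear_combination
          (((|f'' b| ^ q) / (2 ^ (q+2) * (q+2))
            + (∫ u in (0:ℝ)..(1/2), u ^ q * (1-u)) * |f'' a| ^ q)^(1/q)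
          + ((|f'' a| ^ q) / (2 ^ (q+2) * (q+2))
            + (∫ u in (0:ℝ)..(1/2), u ^ q * (1-u)) * |f'' b| ^ q)^(1/q)) * ecoef
end

section
/- Let f : ℝ → ℝ be twice differentiable on an open interval containing [a,b], a < b, with f, f', f'' integrable, and let p, q > 1 with 1/p + 1/q = 1. If |f''|^q is convex on [a,b], then |(f(a)+f(b))/2 - (1/(b-a))∫_a^b f(x)dx| ≤ (b-a)² ((2^{p+1}-1)/(2^{2p+1}(p+1)))^{1/p} { [ |f''(b)|^q/(2^{q+2}(q+2)) + B(1/2; q+1,2)|f''(a)|^q ]^{1/q} + [ B(1/2; q+1,2)|f''(b)|^q + |f''(a)|^q/(2^{q+2}(q+2)) ]^{1/q} }. -/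
open MeasureTheory Set

lemma trap_id (f f' f'' : ℝ → ℝ) (a b : ℝ)
    (hdf : ∀ x ∈ Set.uIcc a b, HasDerivAt f (f' x) x)
    (hdf2 : ∀ x ∈ Set.uIcc a b, HasDerivAt f' (f'' x) x)
    (hfi : IntervalIntegrable f volume a b)
    (hf1i : IntervalIntegrable f' volume a b)
    (hf2i : IntervalIntegrable f'' volume a b) :
    ∫ x in a..b, (x-a)*(b-x)*f'' x = (b-a)*(f a + f b) - 2*∫ x in a..b, f x := by
  have hu : ∀ x ∈ Set.uIcc a b, HasDerivAt (fun x => (x-a)*(b-x)) (a+b-2*x) x := by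
    intro x _
    have h : HasDerivAt (fun x => (x-a)*(b-x)) (1*(b-x) + (x-a)*(0-1)) x :=
      (((hasDerivAt_id x).sub_const a).mul ((hasDerivAt_const x b).sub (hasDerivAt_id x)))
    convert h using 1; ring
  have h1 := intervalIntegral.integral_mul_deriv_eq_deriv_mul hu hdf2
    (Continuous.intervalIntegrable (by continuity) a b) hf2i
  have hu2 : ∀ x ∈ Set.uIcc a b, HasDerivAt (fun x => a+b-2*x) (-2) x := by
    intro x _
    have h : HasDerivAt (fun x => a+b-2*x) (0 - 2*1) x :=
      ((hasDerivAt_const x (a+b)).sub ((hasDerivAt_id x).const_mul 2))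
    convert h using 1; simp
  have h2 := intervalIntegral.integral_mul_deriv_eq_deriv_mul hu2 hdf
    (Continuous.intervalIntegrable (continuous_const : Continuous fun _ : ℝ => (-2:ℝ)) a b) hf1i
  rw [intervalIntegral.integral_const_mul] at h2
  rw [h1, h2]; ring

lemma holder_Ioc {a m p q : ℝ} (hpq : Real.HolderConjugate p q) {F G : ℝ → ℝ}
    (hF : AEStronglyMeasurable F (volume.restrict (Ioc a m)))
    (hG : AEStronglyMeasurable G (volume.restrict (Ioc a m)))
    (CF CG : ℝ) (hFb : ∀ x ∈ Ioc a m, |F x| ≤ CF) (hGb : ∀ x ∈ Ioc a m, |G x| ≤ CG)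
    (hFnn : ∀ x ∈ Ioc a m, 0 ≤ F x) (hGnn : ∀ x ∈ Ioc a m, 0 ≤ G x) :
    ∫ x in Ioc a m, F x * G x ≤
      (∫ x in Ioc a m, F x ^ p) ^ (1/p) * (∫ x in Ioc a m, G x ^ q) ^ (1/q) := by
  haveI : IsFiniteMeasure (volume.restrict (Ioc a m)) :=
    ⟨by rw [Measure.restrict_apply_univ]; exact measure_Ioc_lt_top⟩
  have hFb' : ∀ᵐ x ∂(volume.restrict (Ioc a m)), ‖F x‖ ≤ CF :=
    (ae_restrict_iff' measurableSet_Ioc).2 (ae_of_all _ (by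
      intro x hx; rw [Real.norm_eq_abs]; exact hFb x hx))
  have hGb' : ∀ᵐ x ∂(volume.restrict (Ioc a m)), ‖G x‖ ≤ CG :=
    (ae_restrict_iff' measurableSet_Ioc).2 (ae_of_all _ (by
      intro x hx; rw [Real.norm_eq_abs]; exact hGb x hx))
  exact MeasureTheory.integral_mul_le_Lp_mul_Lq_of_nonneg hpq
    ((ae_restrict_iff' measurableSet_Ioc).2 (ae_of_all _ hFnn))
    ((ae_restrict_iff' measurableSet_Ioc).2 (ae_of_all _ hGnn))
    (MemLp.of_bound hF CF hFb') (MemLp.of_bound hG CG hGb')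

lemma rpow_two_eq (x : ℝ) (hx : 0 < x) (q : ℝ) : x ^ (q+2) = x ^ q * (x * x) := by
  rw [Real.rpow_add hx, show ((2:ℝ) = ((2:ℕ):ℝ)) by norm_num, Real.rpow_natCast]; ring

lemma comp1 (a b q : ℝ) (hab : a < b) (hq : 0 < q) :
    ∫ x in a..(a+b)/2, (x-a)^q * (b-x) = (b-a)^(q+2) * ∫ u in (0:ℝ)..(1/2), u^q*(1-u) := by
  have hba : (0:ℝ) < b - a := by linarith
  have hc : b - a ≠ 0 := ne_of_gt hba
  have h := intervalIntegral.integral_comp_mul_add (f := fun x => (x-a)^q * (b-x))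
    (a := (0:ℝ)) (b := 1/2) hc a
  have e1 : (b-a) * 0 + a = a := by ring
  have e2 : (b-a) * (1/2) + a = (a+b)/2 := by ring
  rw [e1, e2] at h
  have h2 : (∫ u in (0:ℝ)..(1/2), (fun x => (x-a)^q * (b-x)) ((b-a)*u + a))
      = ((b-a)^q * (b-a)) * ∫ u in (0:ℝ)..(1/2), u^q*(1-u) := by
    rw [← intervalIntegral.integral_const_mul]
    apply intervalIntegral.integral_congr
    intro u hu
    have hu0 : 0 ≤ u := by
      rcases hu with ⟨h1, _⟩
      simpa using h1.trans_eq' (by norm_num [min_def])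
    simp only
    rw [show (b-a)*u + a - a = (b-a)*u by ring, Real.mul_rpow (le_of_lt hba) hu0]
    ring_nf
  rw [rpow_two_eq _ hba q]
  have h3 : ∫ x in a..(a+b)/2, (x-a)^q * (b-x)
      = (b-a) * (((b-a)^q * (b-a)) * ∫ u in (0:ℝ)..(1/2), u^q*(1-u)) := by
    rw [← h2, h, smul_eq_mul]; field_simp
  rw [h3]; ring

lemma comp2 (a b q : ℝ) (hab : a < b) (hq : 0 < q) :
    ∫ x in a..(a+b)/2, (x-a)^(q+1) = ((b-a)/2)^(q+2)/(q+2) := by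
  have h := intervalIntegral.integral_comp_sub_right (f := fun x => x^(q+1))
    (a := a) (b := (a+b)/2) a
  rw [show a - a = (0:ℝ) by ring, show (a+b)/2 - a = (b-a)/2 by ring] at h
  rw [h, integral_rpow (Or.inl (by linarith))]
  rw [Real.zero_rpow (by positivity), show q+1+1 = q+2 by ring, sub_zero]

lemma compP1 (a b pp : ℝ) (hab : a < b) (hp : 0 < pp) :
    ∫ x in a..(a+b)/2, (b-x)^pp = ((b-a)^(pp+1) - ((b-a)/2)^(pp+1))/(pp+1) := by
  have h := intervalIntegral.integral_comp_sub_left (f := fun x => x^pp)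
    (a := a) (b := (a+b)/2) b
  rw [show b - (a+b)/2 = (b-a)/2 by ring] at h
  rw [h, integral_rpow (Or.inl (by linarith))]

lemma compP2 (a b pp : ℝ) (hab : a < b) (hp : 0 < pp) :
    ∫ x in ((a+b)/2)..b, (x-a)^pp = ((b-a)^(pp+1) - ((b-a)/2)^(pp+1))/(pp+1) := by
  have h := intervalIntegral.integral_comp_sub_right (f := fun x => x^pp)
    (a := (a+b)/2) (b := b) a
  rw [show (a+b)/2 - a = (b-a)/2 by ring] at h
  rw [h, integral_rpow (Or.inl (by linarith))]

lemma refl_int (a b : ℝ) (g : ℝ → ℝ) :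
    ∫ x in ((a+b)/2)..b, g (a+b-x) = ∫ x in a..(a+b)/2, g x := by
  have h := intervalIntegral.integral_comp_sub_left (f := g)
    (a := (a+b)/2) (b := b) (a+b)
  rw [show a+b-b = a by ring, show a+b-(a+b)/2 = (a+b)/2 by ring] at h
  exact h

lemma comp1' (a b q : ℝ) (hab : a < b) (hq : 0 < q) :
    ∫ x in ((a+b)/2)..b, (b-x)^q * (x-a) = (b-a)^(q+2) * ∫ u in (0:ℝ)..(1/2), u^q*(1-u) := by
  have h := refl_int a b (fun y => (y-a)^q * (b-y))
  rw [← comp1 a b q hab hq, ← h]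
  apply intervalIntegral.integral_congr
  intro x _
  simp only
  rw [show a+b-x-a = b-x by ring, show b-(a+b-x) = x-a by ring]

lemma comp2' (a b q : ℝ) (hab : a < b) (hq : 0 < q) :
    ∫ x in ((a+b)/2)..b, (b-x)^(q+1) = ((b-a)/2)^(q+2)/(q+2) := by
  have h := refl_int a b (fun y => (y-a)^(q+1))
  rw [← comp2 a b q hab hq, ← h]
  apply intervalIntegral.integral_congr
  intro x _
  simp only
  rw [show a+b-x-a = b-x by ring]

lemma const_eq (D p q : ℝ) (hD : 0 < D) (hp : 1 < p) (hq : 1 < q) (hpq : 1/p + 1/q = 1) :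
    ((D^(p+1) - (D/2)^(p+1))/(p+1))^(1/p) * D^((q+1)*(1/q)) / (2*D)
    = D^2 * ((2^(p+1)-1)/(2^(2*p+1)*(p+1)))^(1/p) := by
  have hp0 : (0:ℝ) < p := by linarith
  have hq0 : (0:ℝ) < q := by linarith
  have h2p : (0:ℝ) < (2:ℝ)^(p+1) := Real.rpow_pos_of_pos (by norm_num) _
  have h2p' : (1:ℝ) ≤ (2:ℝ)^(p+1) := Real.one_le_rpow (by norm_num) (by linarith)
  -- rewrite K = D^(p+1) * C0 with C0 = (2^(p+1)-1)/(2^(p+1)*(p+1))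
  have hDp : (0:ℝ) < D^(p+1) := Real.rpow_pos_of_pos hD _
  have hK : (D^(p+1) - (D/2)^(p+1))/(p+1) = D^(p+1) * ((2^(p+1)-1)/(2^(p+1)*(p+1))) := by
    rw [Real.div_rpow (le_of_lt hD) (by norm_num)]
    field_simp
  have hC0 : (0:ℝ) ≤ (2^(p+1)-1)/(2^(p+1)*(p+1)) := by
    apply div_nonneg (by linarith) (by positivity)
  rw [hK, Real.mul_rpow (le_of_lt hDp) hC0, ← Real.rpow_mul (le_of_lt hD)]
  -- C1 = C0 * (1/2)^p
  have hC1 : (2^(p+1)-1)/(2^(2*p+1)*(p+1)) = ((2^(p+1)-1)/(2^(p+1)*(p+1))) * ((1:ℝ)/2)^p := by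
    have h22 : (2:ℝ)^(2*p+1) = 2^(p+1) * 2^p := by
      rw [← Real.rpow_add (by norm_num)]; ring_nf
    have h2pp : (0:ℝ) < (2:ℝ)^p := Real.rpow_pos_of_pos (by norm_num) _
    rw [h22, one_div, Real.inv_rpow (by norm_num)]
    field_simp
    try exact Or.inl trivial
  rw [hC1, Real.mul_rpow hC0 (by positivity), ← Real.rpow_mul (by norm_num),
    mul_one_div_cancel (ne_of_gt hp0), Real.rpow_one]
  have hDexp : D^((p+1)*(1/p)) * D^((q+1)*(1/q)) / D = D^2 := by
    rw [div_eq_mul_inv, ← Real.rpow_neg_one D, ← Real.rpow_add hD, ← Real.rpow_add hD]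
    have : (p+1)*(1/p) + (q+1)*(1/q) + (-1) = 2 := by
      have e1 : (p+1)*(1/p) = 1 + 1/p := by field_simp
      have e2 : (q+1)*(1/q) = 1 + 1/q := by field_simp
      rw [e1, e2]; linarith [hpq]
    rw [this]
    rw [show ((2:ℝ) = ((2:ℕ):ℝ)) by norm_num, Real.rpow_natCast]
  field_simp at hDexp ⊢
  rw [hDexp]

lemma conv_pt (f'' : ℝ → ℝ) (a b q : ℝ) (hab : a < b)
    (hconv : ConvexOn ℝ (Icc a b) fun x => |f'' x|^q) (x : ℝ) (hx : x ∈ Icc a b) :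
    |f'' x|^q ≤ ((b-x)*|f'' a|^q + (x-a)*|f'' b|^q)/(b-a) := by
  have hD : (0:ℝ) < b - a := by linarith
  have hs : 0 ≤ (b-x)/(b-a) := div_nonneg (by linarith [hx.2]) (le_of_lt hD)
  have ht : 0 ≤ (x-a)/(b-a) := div_nonneg (by linarith [hx.1]) (le_of_lt hD)
  have hst : (b-x)/(b-a) + (x-a)/(b-a) = 1 := by field_simp; ring
  have h := hconv.2 (Set.left_mem_Icc.2 (le_of_lt hab)) (Set.right_mem_Icc.2 (le_of_lt hab))
    hs ht hst
  have hxeq : ((b-x)/(b-a)) • a + ((x-a)/(b-a)) • b = x := by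
    simp only [smul_eq_mul]; field_simp; ring
  rw [hxeq] at h
  calc |f'' x|^q ≤ (b-x)/(b-a) * |f'' a|^q + (x-a)/(b-a) * |f'' b|^q := by
        simpa [smul_eq_mul] using h
    _ = ((b-x)*|f'' a|^q + (x-a)*|f'' b|^q)/(b-a) := by ring

lemma conv_bd (f'' : ℝ → ℝ) (a b q : ℝ) (hab : a < b) (hq : 0 < q)
    (hconv : ConvexOn ℝ (Icc a b) fun x => |f'' x|^q) (x : ℝ) (hx : x ∈ Icc a b) :
    |f'' x| ≤ (max (|f'' a|^q) (|f'' b|^q)) ^ q⁻¹ := by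
  have h := conv_pt f'' a b q hab hconv x hx
  have hD : (0:ℝ) < b - a := by linarith
  have hM : |f'' x|^q ≤ max (|f'' a|^q) (|f'' b|^q) := by
    calc |f'' x|^q ≤ ((b-x)*|f'' a|^q + (x-a)*|f'' b|^q)/(b-a) := h
      _ ≤ ((b-x)*(max (|f'' a|^q) (|f'' b|^q)) + (x-a)*(max (|f'' a|^q) (|f'' b|^q)))/(b-a) := by
          gcongr ((b-x)*?_ + (x-a)*?_)/(b-a) <;>
            first
            | linarith [hx.1, hx.2]
            | exact le_max_left _ _
            | exact le_max_right _ _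
      _ = max (|f'' a|^q) (|f'' b|^q) := by field_simp; ring
  calc |f'' x| = (|f'' x|^q)^q⁻¹ := by
        rw [Real.rpow_rpow_inv (abs_nonneg _) (ne_of_gt hq)]
    _ ≤ (max (|f'' a|^q) (|f'' b|^q)) ^ q⁻¹ :=
        Real.rpow_le_rpow (Real.rpow_nonneg (abs_nonneg _) _) hM (le_of_lt (inv_pos.2 hq))

lemma integrableOn_of_bdd {a m C : ℝ} {g : ℝ → ℝ}
    (hmeas : AEStronglyMeasurable g (volume.restrict (Ioc a m)))
    (hb : ∀ x ∈ Ioc a m, |g x| ≤ C) : IntegrableOn g (Ioc a m) volume := by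
  haveI : IsFiniteMeasure (volume.restrict (Ioc a m)) :=
    ⟨by rw [Measure.restrict_apply_univ]; exact measure_Ioc_lt_top⟩
  exact memLp_one_iff_integrable.1 (MemLp.of_bound hmeas C
    ((ae_restrict_iff' measurableSet_Ioc).2 (ae_of_all _ (by
      intro x hx; rw [Real.norm_eq_abs]; exact hb x hx))))

set_option maxHeartbeats 1000000 in
lemma half1 (f'' : ℝ → ℝ) (a b p q : ℝ) (hab : a < b) (hp : 1 < p) (hq : 1 < q)
    (hconj : Real.HolderConjugate p q)
    (hconv : ConvexOn ℝ (Icc a b) fun x => |f'' x|^q)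
    (hmeas : AEStronglyMeasurable f'' (volume.restrict (Ioc a b))) :
    ∫ x in a..((a+b)/2), (x-a)*(b-x)*|f'' x|
    ≤ (((b-a)^(p+1) - ((b-a)/2)^(p+1))/(p+1))^(1/p) *
      ((b-a)^(q+1) * ((|f'' b|^q)/(2^(q+2)*(q+2))
        + (∫ u in (0:ℝ)..(1/2), u^q*(1-u)) * (|f'' a|^q)))^(1/q) := by
  set m := (a+b)/2 with hm_def
  set D := b - a with hD_def
  set A := |f'' a|^q with hA_def
  set B := |f'' b|^q with hB_def
  set β := ∫ u in (0:ℝ)..(1/2), u^q*(1-u) with hβ_def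
  have hD : (0:ℝ) < D := by simp [hD_def]; linarith
  have ham : a ≤ m := by simp [hm_def]; linarith
  have hmb : m ≤ b := by simp [hm_def]; linarith
  have hq0 : (0:ℝ) < q := by linarith
  have hsub : Ioc a m ⊆ Icc a b := fun x hx => ⟨le_of_lt hx.1, hx.2.trans hmb⟩
  set M := (max A B)^q⁻¹ with hM_def
  have hMnn : 0 ≤ M := Real.rpow_nonneg (le_max_iff.2 (Or.inl (Real.rpow_nonneg (abs_nonneg _) _))) _
  have habs : AEStronglyMeasurable (fun x => |f'' x|) (volume.restrict (Ioc a m)) := by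
    have := (hmeas.mono_measure (Measure.restrict_mono (Set.Ioc_subset_Ioc_right hmb) le_rfl)).norm
    simpa [Real.norm_eq_abs] using this
  have hbd : ∀ x ∈ Ioc a m, |f'' x| ≤ M :=
    fun x hx => conv_bd f'' a b q hab hq0 hconv x (hsub hx)
  -- step 1 : rewrite as set integral of F * G
  have e0 : ∫ x in a..m, (x-a)*(b-x)*|f'' x| = ∫ x in Ioc a m, (b-x) * ((x-a)*|f'' x|) := by
    rw [intervalIntegral.integral_of_le ham]
    exact setIntegral_congr_fun measurableSet_Ioc (fun x _ => by ring)
  -- step 2 : Hölder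
  have hG : AEStronglyMeasurable (fun x => (x-a)*|f'' x|) (volume.restrict (Ioc a m)) :=
    (Continuous.aestronglyMeasurable (by continuity)).mul habs
  have hold := holder_Ioc hconj
    (F := fun x => b - x) (G := fun x => (x-a)*|f'' x|)
    (Continuous.aestronglyMeasurable (by continuity)) hG D (D*M)
    (fun x hx => by
      show |b - x| ≤ D
      rw [abs_of_nonneg (by linarith [hx.2.trans hmb] : (0:ℝ) ≤ b - x)]
      show b - x ≤ b - a; linarith [hx.1])
    (fun x hx => by
      show abs ((x-a)*abs (f'' x)) ≤ D*M
      rw [abs_of_nonneg (mul_nonneg (by linarith [hx.1]) (abs_nonneg _))]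
      have h1 : x - a ≤ D := by show x - a ≤ b - a; linarith [hx.2.trans hmb]
      exact mul_le_mul h1 (hbd x hx) (abs_nonneg _) (le_of_lt hD))
    (fun x hx => by show (0:ℝ) ≤ b - x; linarith [hx.2.trans hmb])
    (fun x hx => mul_nonneg (by linarith [hx.1]) (abs_nonneg _))
  rw [e0]
  -- step 3 : first factor value
  have f1 : ∫ x in Ioc a m, (b-x)^p = (D^(p+1) - (D/2)^(p+1))/(p+1) := by
    rw [← intervalIntegral.integral_of_le ham]
    exact compP1 a b p hab (by linarith)
  -- step 4 : second factor bound
  have hcont_q : Continuous fun x : ℝ => (x-a)^q :=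
    (Real.continuous_rpow_const (le_of_lt hq0)).comp (by continuity)
  have hmeas_gq : AEStronglyMeasurable (fun x => |f'' x|^q) (volume.restrict (Ioc a m)) :=
    (Real.continuous_rpow_const (le_of_lt hq0)).comp_aestronglyMeasurable habs
  have f2a : ∫ x in Ioc a m, ((x-a)*|f'' x|)^q = ∫ x in Ioc a m, (x-a)^q * |f'' x|^q :=
    setIntegral_congr_fun measurableSet_Ioc (fun x hx => by
      rw [Real.mul_rpow (by linarith [hx.1] : (0:ℝ) ≤ x - a) (abs_nonneg _)])
  have f2b : ∫ x in Ioc a m, (x-a)^q * |f'' x|^q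
      ≤ ∫ x in Ioc a m, (x-a)^q * (((b-x)*A + (x-a)*B)/D) := by
    apply setIntegral_mono_on
    · apply integrableOn_of_bdd (C := D^q * max A B)
        ((hcont_q.aestronglyMeasurable).mul hmeas_gq)
      intro x hx
      show |(x-a)^q * |f'' x|^q| ≤ D^q * max A B
      rw [abs_of_nonneg (mul_nonneg (Real.rpow_nonneg (by linarith [hx.1]) _)
        (Real.rpow_nonneg (abs_nonneg _) _))]
      apply mul_le_mul
      · exact Real.rpow_le_rpow (by linarith [hx.1]) (show x - a ≤ D by show x - a ≤ b - a; linarith [hx.2.trans hmb]) (le_of_lt hq0)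
      · calc |f'' x|^q ≤ M^q := Real.rpow_le_rpow (abs_nonneg _) (hbd x hx) (le_of_lt hq0)
          _ = max A B := Real.rpow_inv_rpow (le_trans (Real.rpow_nonneg (abs_nonneg _) _) (le_max_left _ _)) (ne_of_gt hq0)
      · exact Real.rpow_nonneg (abs_nonneg _) _
      · exact Real.rpow_nonneg (le_of_lt hD) _
    · apply Continuous.integrableOn_Ioc
      apply hcont_q.mul
      exact ((continuous_const.sub continuous_id).mul continuous_const |>.add
        ((continuous_id.sub continuous_const).mul continuous_const)).div_const _
    · exact measurableSet_Ioc
    · intro x hx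
      exact mul_le_mul_of_nonneg_left (conv_pt f'' a b q hab hconv x (hsub hx))
        (Real.rpow_nonneg (by linarith [hx.1.le]) _)
  have key : ∀ t c : ℝ, 0 ≤ t →
      t^q * ((c*A + t*B)/D) = (A/D)*(t^q*c) + (B/D)*t^(q+1) := by
    intro t c ht
    rcases eq_or_lt_of_le ht with h0 | h0
    · rw [← h0, Real.zero_rpow (ne_of_gt hq0), Real.zero_rpow (by linarith)]; ring
    · rw [Real.rpow_add_one (ne_of_gt h0)]; ring
  have f2c : ∫ x in Ioc a m, (x-a)^q * (((b-x)*A + (x-a)*B)/D)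
      = D^(q+1) * (B/(2^(q+2)*(q+2)) + β * A) := by
    rw [← intervalIntegral.integral_of_le ham]
    have : ∫ x in a..m, (x-a)^q * (((b-x)*A + (x-a)*B)/D)
        = ∫ x in a..m, ((A/D)*((x-a)^q*(b-x)) + (B/D)*(x-a)^(q+1)) := by
      apply intervalIntegral.integral_congr
      rw [Set.uIcc_of_le ham]
      intro x hx
      exact key (x-a) (b-x) (by linarith [hx.1])
    rw [this, intervalIntegral.integral_add, intervalIntegral.integral_const_mul,
      intervalIntegral.integral_const_mul, comp1 a b q hab hq0, comp2 a b q hab hq0]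
    · have h2q : (0:ℝ) < (2:ℝ)^(q+2) := Real.rpow_pos_of_pos (by norm_num) _
      have hDq2 : D^(q+2) = D^(q+1) * D := by
        rw [show q+2 = (q+1)+1 by ring, Real.rpow_add_one (ne_of_gt hD)]
      have hDdiv : (D/2)^(q+2) = D^(q+2)/2^(q+2) := Real.div_rpow (le_of_lt hD) (by norm_num) _
      rw [hDdiv, hDq2]
      field_simp
      ring
    · exact ((hcont_q.mul (by continuity)).intervalIntegrable a m).const_mul _
    · exact (((Real.continuous_rpow_const (by linarith : (0:ℝ) ≤ q+1)).comp
        (by continuity : Continuous fun x : ℝ => x - a)).intervalIntegrable a m).const_mul _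
  -- combine
  have hf2nn : 0 ≤ ∫ x in Ioc a m, ((x-a)*|f'' x|)^q :=
    setIntegral_nonneg measurableSet_Ioc (fun x hx => Real.rpow_nonneg
      (mul_nonneg (by linarith [hx.1]) (abs_nonneg _)) _)
  calc ∫ x in Ioc a m, (b-x) * ((x-a)*|f'' x|)
      ≤ (∫ x in Ioc a m, (b-x)^p)^(1/p) * (∫ x in Ioc a m, ((x-a)*|f'' x|)^q)^(1/q) := hold
    _ ≤ (∫ x in Ioc a m, (b-x)^p)^(1/p) * (D^(q+1) * (B/(2^(q+2)*(q+2)) + β * A))^(1/q) := by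
        apply mul_le_mul_of_nonneg_left _ (Real.rpow_nonneg
          (setIntegral_nonneg measurableSet_Ioc (fun x hx => Real.rpow_nonneg (by linarith [hx.2.trans hmb]) _)) _)
        apply Real.rpow_le_rpow hf2nn _ (by positivity)
        rw [f2a]; rw [← f2c]; exact f2b
    _ = (((b-a)^(p+1) - ((b-a)/2)^(p+1))/(p+1))^(1/p) *
        (D^(q+1) * (B/(2^(q+2)*(q+2)) + β * A))^(1/q) := by rw [f1]

set_option maxHeartbeats 1000000 in
lemma half2 (f'' : ℝ → ℝ) (a b p q : ℝ) (hab : a < b) (hp : 1 < p) (hq : 1 < q)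
    (hconj : Real.HolderConjugate p q)
    (hconv : ConvexOn ℝ (Icc a b) fun x => |f'' x|^q)
    (hmeas : AEStronglyMeasurable f'' (volume.restrict (Ioc a b))) :
    ∫ x in ((a+b)/2)..b, (x-a)*(b-x)*|f'' x|
    ≤ (((b-a)^(p+1) - ((b-a)/2)^(p+1))/(p+1))^(1/p) *
      ((b-a)^(q+1) * ((∫ u in (0:ℝ)..(1/2), u^q*(1-u)) * (|f'' b|^q)
        + (|f'' a|^q)/(2^(q+2)*(q+2))))^(1/q) := by
  set m := (a+b)/2 with hm_def
  set D := b - a with hD_def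
  set A := |f'' a|^q with hA_def
  set B := |f'' b|^q with hB_def
  set β := ∫ u in (0:ℝ)..(1/2), u^q*(1-u) with hβ_def
  have hD : (0:ℝ) < D := by simp [hD_def]; linarith
  have ham : a ≤ m := by simp [hm_def]; linarith
  have hmb : m ≤ b := by simp [hm_def]; linarith
  have hq0 : (0:ℝ) < q := by linarith
  have hsub : Ioc m b ⊆ Icc a b := fun x hx => ⟨ham.trans (le_of_lt hx.1), hx.2⟩
  set M := (max A B)^q⁻¹ with hM_def
  have habs : AEStronglyMeasurable (fun x => |f'' x|) (volume.restrict (Ioc m b)) := by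
    have := (hmeas.mono_measure (Measure.restrict_mono (Set.Ioc_subset_Ioc_left ham) le_rfl)).norm
    simpa [Real.norm_eq_abs] using this
  have hbd : ∀ x ∈ Ioc m b, |f'' x| ≤ M :=
    fun x hx => conv_bd f'' a b q hab hq0 hconv x (hsub hx)
  have e0 : ∫ x in m..b, (x-a)*(b-x)*|f'' x| = ∫ x in Ioc m b, (x-a) * ((b-x)*|f'' x|) := by
    rw [intervalIntegral.integral_of_le hmb]
    exact setIntegral_congr_fun measurableSet_Ioc (fun x _ => by ring)
  have hG : AEStronglyMeasurable (fun x => (b-x)*|f'' x|) (volume.restrict (Ioc m b)) :=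
    (Continuous.aestronglyMeasurable (by continuity)).mul habs
  have hold := holder_Ioc hconj
    (F := fun x => x - a) (G := fun x => (b-x)*|f'' x|)
    (Continuous.aestronglyMeasurable (by continuity)) hG D (D*M)
    (fun x hx => by
      show |x - a| ≤ D
      rw [abs_of_nonneg (by linarith [ham.trans_lt hx.1] : (0:ℝ) ≤ x - a)]
      show x - a ≤ b - a; linarith [hx.2])
    (fun x hx => by
      show abs ((b-x)*abs (f'' x)) ≤ D*M
      rw [abs_of_nonneg (mul_nonneg (by linarith [hx.2]) (abs_nonneg _))]
      have h1 : b - x ≤ D := by show b - x ≤ b - a; linarith [ham.trans_lt hx.1]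
      exact mul_le_mul h1 (hbd x hx) (abs_nonneg _) (le_of_lt hD))
    (fun x hx => by show (0:ℝ) ≤ x - a; linarith [ham.trans_lt hx.1])
    (fun x hx => mul_nonneg (by linarith [hx.2]) (abs_nonneg _))
  rw [e0]
  have f1 : ∫ x in Ioc m b, (x-a)^p = (D^(p+1) - (D/2)^(p+1))/(p+1) := by
    rw [← intervalIntegral.integral_of_le hmb]
    exact compP2 a b p hab (by linarith)
  have hcont_q : Continuous fun x : ℝ => (b-x)^q :=
    (Real.continuous_rpow_const (le_of_lt hq0)).comp (by continuity)
  have hmeas_gq : AEStronglyMeasurable (fun x => |f'' x|^q) (volume.restrict (Ioc m b)) :=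
    (Real.continuous_rpow_const (le_of_lt hq0)).comp_aestronglyMeasurable habs
  have f2a : ∫ x in Ioc m b, ((b-x)*|f'' x|)^q = ∫ x in Ioc m b, (b-x)^q * |f'' x|^q :=
    setIntegral_congr_fun measurableSet_Ioc (fun x hx => by
      rw [Real.mul_rpow (by linarith [hx.2] : (0:ℝ) ≤ b - x) (abs_nonneg _)])
  have f2b : ∫ x in Ioc m b, (b-x)^q * |f'' x|^q
      ≤ ∫ x in Ioc m b, (b-x)^q * (((b-x)*A + (x-a)*B)/D) := by
    apply setIntegral_mono_on
    · apply integrableOn_of_bdd (C := D^q * max A B)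
        ((hcont_q.aestronglyMeasurable).mul hmeas_gq)
      intro x hx
      show |(b-x)^q * |f'' x|^q| ≤ D^q * max A B
      rw [abs_of_nonneg (mul_nonneg (Real.rpow_nonneg (by linarith [hx.2]) _)
        (Real.rpow_nonneg (abs_nonneg _) _))]
      apply mul_le_mul
      · exact Real.rpow_le_rpow (by linarith [hx.2]) (show b - x ≤ D by
          show b - x ≤ b - a; linarith [ham.trans_lt hx.1]) (le_of_lt hq0)
      · calc |f'' x|^q ≤ M^q := Real.rpow_le_rpow (abs_nonneg _) (hbd x hx) (le_of_lt hq0)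
          _ = max A B := Real.rpow_inv_rpow (le_trans (Real.rpow_nonneg (abs_nonneg _) _) (le_max_left _ _)) (ne_of_gt hq0)
      · exact Real.rpow_nonneg (abs_nonneg _) _
      · exact Real.rpow_nonneg (le_of_lt hD) _
    · apply Continuous.integrableOn_Ioc
      apply hcont_q.mul
      exact ((continuous_const.sub continuous_id).mul continuous_const |>.add
        ((continuous_id.sub continuous_const).mul continuous_const)).div_const _
    · exact measurableSet_Ioc
    · intro x hx
      exact mul_le_mul_of_nonneg_left (conv_pt f'' a b q hab hconv x (hsub hx))
        (Real.rpow_nonneg (by linarith [hx.2]) _)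
  have key : ∀ t c : ℝ, 0 ≤ t →
      t^q * ((t*A + c*B)/D) = (B/D)*(t^q*c) + (A/D)*t^(q+1) := by
    intro t c ht
    rcases eq_or_lt_of_le ht with h0 | h0
    · rw [← h0, Real.zero_rpow (ne_of_gt hq0), Real.zero_rpow (by linarith)]; ring
    · rw [Real.rpow_add_one (ne_of_gt h0)]; ring
  have f2c : ∫ x in Ioc m b, (b-x)^q * (((b-x)*A + (x-a)*B)/D)
      = D^(q+1) * (β * B + A/(2^(q+2)*(q+2))) := by
    rw [← intervalIntegral.integral_of_le hmb]
    have : ∫ x in m..b, (b-x)^q * (((b-x)*A + (x-a)*B)/D)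
        = ∫ x in m..b, ((B/D)*((b-x)^q*(x-a)) + (A/D)*(b-x)^(q+1)) := by
      apply intervalIntegral.integral_congr
      rw [Set.uIcc_of_le hmb]
      intro x hx
      exact key (b-x) (x-a) (by linarith [hx.2])
    rw [this, intervalIntegral.integral_add, intervalIntegral.integral_const_mul,
      intervalIntegral.integral_const_mul, comp1' a b q hab hq0, comp2' a b q hab hq0]
    · have h2q : (0:ℝ) < (2:ℝ)^(q+2) := Real.rpow_pos_of_pos (by norm_num) _
      have hDq2 : D^(q+2) = D^(q+1) * D := by
        rw [show q+2 = (q+1)+1 by ring, Real.rpow_add_one (ne_of_gt hD)]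
      have hDdiv : (D/2)^(q+2) = D^(q+2)/2^(q+2) := Real.div_rpow (le_of_lt hD) (by norm_num) _
      rw [hDdiv, hDq2]
      field_simp
      ring
    · refine (Continuous.intervalIntegrable ?_ m b).const_mul _
      exact hcont_q.mul (continuous_id.sub continuous_const)
    · exact (((Real.continuous_rpow_const (by linarith : (0:ℝ) ≤ q+1)).comp
        (by continuity : Continuous fun x : ℝ => b - x)).intervalIntegrable m b).const_mul _
  have hf2nn : 0 ≤ ∫ x in Ioc m b, ((b-x)*|f'' x|)^q :=
    setIntegral_nonneg measurableSet_Ioc (fun x hx => Real.rpow_nonneg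
      (mul_nonneg (by linarith [hx.2]) (abs_nonneg _)) _)
  calc ∫ x in Ioc m b, (x-a) * ((b-x)*|f'' x|)
      ≤ (∫ x in Ioc m b, (x-a)^p)^(1/p) * (∫ x in Ioc m b, ((b-x)*|f'' x|)^q)^(1/q) := hold
    _ ≤ (∫ x in Ioc m b, (x-a)^p)^(1/p) * (D^(q+1) * (β * B + A/(2^(q+2)*(q+2))))^(1/q) := by
        apply mul_le_mul_of_nonneg_left _ (Real.rpow_nonneg
          (setIntegral_nonneg measurableSet_Ioc (fun x hx => Real.rpow_nonneg (by linarith [ham.trans_lt hx.1]) _)) _)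
        apply Real.rpow_le_rpow hf2nn _ (by positivity)
        rw [f2a]; rw [← f2c]; exact f2b
    _ = (((b-a)^(p+1) - ((b-a)/2)^(p+1))/(p+1))^(1/p) *
        (D^(q+1) * (β * B + A/(2^(q+2)*(q+2))))^(1/q) := by rw [f1]

set_option maxHeartbeats 1000000 in
theorem stmt_15 (f f' f'' : ℝ → ℝ) (I : Set ℝ) (hI : IsOpen I) (a b : ℝ) (hab : a < b)
    (hsub : Set.Icc a b ⊆ I)
    (hdf : ∀ x ∈ I, HasDerivAt f (f' x) x)
    (hdf2 : ∀ x ∈ I, HasDerivAt f' (f'' x) x)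
    (hfi : IntervalIntegrable f MeasureTheory.volume a b)
    (hf1i : IntervalIntegrable f' MeasureTheory.volume a b)
    (hf2i : IntervalIntegrable f'' MeasureTheory.volume a b)
    (p q : ℝ) (hp : 1 < p) (hq : 1 < q) (hpq : 1/p + 1/q = 1)
    (hconv : ConvexOn ℝ (Set.Icc a b) (fun x => |f'' x| ^ q)) :
    |(f a + f b)/2 - (1/(b-a)) * ∫ x in a..b, f x|
    ≤ (b-a)^2 * ((2 ^ (p+1) - 1) / (2 ^ (2*p+1) * (p+1))) ^ (1/p) *
      (((|f'' b| ^ q) / (2 ^ (q+2) * (q+2))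
        + (∫ u in (0:ℝ)..(1/2), u ^ q * (1-u)) * |f'' a| ^ q) ^ (1/q)
      + ((∫ u in (0:ℝ)..(1/2), u ^ q * (1-u)) * |f'' b| ^ q
        + (|f'' a| ^ q) / (2 ^ (q+2) * (q+2))) ^ (1/q)) := by
  have hD : (0:ℝ) < b - a := by linarith
  have hq0 : (0:ℝ) < q := by linarith
  have huIcc : Set.uIcc a b = Set.Icc a b := Set.uIcc_of_le hab.le
  have hconj : Real.HolderConjugate p q := Real.holderConjugate_iff.2 ⟨hp, by rw [← one_div, ← one_div]; exact hpq⟩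
  have hid := trap_id f f' f'' a b
    (fun x hx => hdf x (hsub (huIcc ▸ hx))) (fun x hx => hdf2 x (hsub (huIcc ▸ hx)))
    hfi hf1i hf2i
  set m := (a+b)/2 with hm_def
  have ham : a ≤ m := by rw [hm_def]; linarith
  have hmb : m ≤ b := by rw [hm_def]; linarith
  set S := ∫ x in a..b, (x-a)*(b-x)*f'' x with hS_def
  set J := ∫ x in a..b, f x with hJ_def
  have hEeq : (f a + f b)/2 - (1/(b-a)) * J = (1/(2*(b-a))) * S := by
    rw [hid]; field_simp
  rw [hEeq, abs_mul, abs_of_pos (by positivity : (0:ℝ) < 1/(2*(b-a)))]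
  -- interval integrability of weight * f''
  have hwc : ContinuousOn (fun x => (x-a)*(b-x)) (Set.uIcc a b) := by fun_prop
  have hw_int : IntervalIntegrable (fun x => (x-a)*(b-x)*f'' x) MeasureTheory.volume a b :=
    hf2i.continuousOn_mul hwc
  have hw1 : IntervalIntegrable (fun x => |(x-a)*(b-x)*f'' x|) MeasureTheory.volume a m :=
    (hw_int.mono_set (by rw [huIcc, Set.uIcc_of_le ham]; exact Set.Icc_subset_Icc le_rfl hmb)).abs
  have hw2 : IntervalIntegrable (fun x => |(x-a)*(b-x)*f'' x|) MeasureTheory.volume m b :=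
    (hw_int.mono_set (by rw [huIcc, Set.uIcc_of_le hmb]; exact Set.Icc_subset_Icc ham le_rfl)).abs
  have habsS : |S| ≤ (∫ x in a..m, (x-a)*(b-x)*|f'' x|) + ∫ x in m..b, (x-a)*(b-x)*|f'' x| := by
    have h1 : |S| ≤ ∫ x in a..b, |(x-a)*(b-x)*f'' x| :=
      intervalIntegral.abs_integral_le_integral_abs hab.le
    have h2 : (∫ x in a..b, |(x-a)*(b-x)*f'' x|)
        = (∫ x in a..m, |(x-a)*(b-x)*f'' x|) + ∫ x in m..b, |(x-a)*(b-x)*f'' x| :=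
      (intervalIntegral.integral_add_adjacent_intervals hw1 hw2).symm
    have h3 : (∫ x in a..m, |(x-a)*(b-x)*f'' x|) = ∫ x in a..m, (x-a)*(b-x)*|f'' x| := by
      apply intervalIntegral.integral_congr
      rw [Set.uIcc_of_le ham]
      intro x hx
      show |(x-a)*(b-x)*f'' x| = (x-a)*(b-x)*|f'' x|
      rw [abs_mul, abs_mul, abs_of_nonneg (by linarith [hx.1] : (0:ℝ) ≤ x - a),
        abs_of_nonneg (by linarith [hx.2.trans hmb] : (0:ℝ) ≤ b - x)]
    have h4 : (∫ x in m..b, |(x-a)*(b-x)*f'' x|) = ∫ x in m..b, (x-a)*(b-x)*|f'' x| := by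
      apply intervalIntegral.integral_congr
      rw [Set.uIcc_of_le hmb]
      intro x hx
      show |(x-a)*(b-x)*f'' x| = (x-a)*(b-x)*|f'' x|
      rw [abs_mul, abs_mul, abs_of_nonneg (by linarith [ham.trans hx.1] : (0:ℝ) ≤ x - a),
        abs_of_nonneg (by linarith [hx.2] : (0:ℝ) ≤ b - x)]
    rw [h2, h3, h4] at h1; exact h1
  have hmeasb : MeasureTheory.AEStronglyMeasurable f''
      (MeasureTheory.volume.restrict (Set.Ioc a b)) := hf2i.1.aestronglyMeasurable
  have hh1 := half1 f'' a b p q hab hp hq hconj hconv hmeasb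
  have hh2 := half2 f'' a b p q hab hp hq hconj hconv hmeasb
  set β := ∫ u in (0:ℝ)..(1/2), u^q*(1-u) with hβ_def
  have hβnn : 0 ≤ β := intervalIntegral.integral_nonneg (by norm_num)
    (fun u hu => mul_nonneg (Real.rpow_nonneg hu.1 _) (by linarith [hu.2]))
  set A := |f'' a|^q with hA_def
  set B := |f'' b|^q with hB_def
  have hAnn : 0 ≤ A := Real.rpow_nonneg (abs_nonneg _) _
  have hBnn : 0 ≤ B := Real.rpow_nonneg (abs_nonneg _) _
  have h2q : (0:ℝ) < (2:ℝ)^(q+2) := Real.rpow_pos_of_pos (by norm_num) _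
  have hbr1 : 0 ≤ B/(2^(q+2)*(q+2)) + β * A :=
    add_nonneg (div_nonneg hBnn (by positivity)) (mul_nonneg hβnn hAnn)
  have hbr2 : 0 ≤ β * B + A/(2^(q+2)*(q+2)) :=
    add_nonneg (mul_nonneg hβnn hBnn) (div_nonneg hAnn (by positivity))
  set K := ((b-a)^(p+1) - ((b-a)/2)^(p+1))/(p+1) with hK_def
  have hKnn : 0 ≤ K := by
    rw [hK_def]
    apply div_nonneg _ (by linarith)
    have := Real.rpow_le_rpow (by linarith : (0:ℝ) ≤ (b-a)/2) (by linarith : (b-a)/2 ≤ b-a)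
      (by linarith : (0:ℝ) ≤ p+1)
    linarith
  have hmr : ∀ br : ℝ, 0 ≤ br → ((b-a)^(q+1) * br)^(1/q)
      = (b-a)^((q+1)*(1/q)) * br^(1/q) := by
    intro br hbr
    rw [Real.mul_rpow (Real.rpow_nonneg hD.le _) hbr, ← Real.rpow_mul hD.le]
  calc 1/(2*(b-a)) * |S|
      ≤ 1/(2*(b-a)) * ((K^(1/p) * ((b-a)^(q+1) * (B/(2^(q+2)*(q+2)) + β * A))^(1/q))
        + (K^(1/p) * ((b-a)^(q+1) * (β * B + A/(2^(q+2)*(q+2))))^(1/q))) := by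
        apply mul_le_mul_of_nonneg_left _ (by positivity)
        calc |S| ≤ _ := habsS
          _ ≤ _ := add_le_add hh1 hh2
    _ = (K^(1/p) * (b-a)^((q+1)*(1/q)) / (2*(b-a))) *
        ((B/(2^(q+2)*(q+2)) + β * A)^(1/q) + (β * B + A/(2^(q+2)*(q+2)))^(1/q)) := by
        rw [hmr _ hbr1, hmr _ hbr2]; ring
    _ = (b-a)^2 * ((2 ^ (p+1) - 1) / (2 ^ (2*p+1) * (p+1))) ^ (1/p) *
        ((B/(2^(q+2)*(q+2)) + β * A)^(1/q) + (β * B + A/(2^(q+2)*(q+2)))^(1/q)) := by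
        rw [const_eq (b-a) p q hD hp hq hpq]
end

section
/- Let f : ℝ → ℝ be twice differentiable on an open interval containing [a,b], a < b, with f, f', f'' integrable, and let p, q > 1 with 1/p + 1/q = 1. If |f''|^q is convex on [a,b], then |(1/6)[f(a) + 4f((a+b)/2) + f(b)] - (1/(b-a))∫_a^b f(x)dx| ≤ (b-a)² ((2^{p+1}-1)/(2^{2p+1}·3^{p+1}(p+1)))^{1/p} { [ |f''(b)|^q/(2^{q+2}(q+2)) + B(1/2; q+1,2)|f''(a)|^q ]^{1/q} + [ B(1/2; q+1,2)|f''(b)|^q + |f''(a)|^q/(2^{q+2}(q+2)) ]^{1/q} }. -/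
set_option maxHeartbeats 1000000

open MeasureTheory intervalIntegral Set

/-- power mean helper -/
lemma pm_helper {u v S q : ℝ} (hu : 0 ≤ u) (hv : 0 ≤ v) (hq : 1 ≤ q)
    (h : u ^ q + v ^ q ≤ S) : u + v ≤ (2 ^ (q - 1) * S) ^ (1 / q) := by
  have hq0 : 0 < q := lt_of_lt_of_le one_pos hq
  have key : (u + v) ^ q ≤ 2 ^ (q - 1) * S := by
    have hnn := NNReal.rpow_add_le_mul_rpow_add_rpow u.toNNReal v.toNNReal hq
    have hco : ((u.toNNReal + v.toNNReal : NNReal) : ℝ) = u + v := by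
      simp [Real.coe_toNNReal _ hu, Real.coe_toNNReal _ hv]
    have h2 : (u + v) ^ q ≤ (2:ℝ) ^ (q - 1) * (u ^ q + v ^ q) := by
      calc (u + v) ^ q = ((u.toNNReal + v.toNNReal : NNReal) : ℝ) ^ q := by rw [hco]
        _ = (((u.toNNReal + v.toNNReal) ^ q : NNReal) : ℝ) := by
              rw [NNReal.coe_rpow]
        _ ≤ ((((2:NNReal) ^ (q-1) * (u.toNNReal ^ q + v.toNNReal ^ q)) : NNReal) : ℝ) := by
              exact_mod_cast hnn
        _ = (2:ℝ) ^ (q - 1) * (u ^ q + v ^ q) := by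
              push_cast [NNReal.coe_rpow, Real.coe_toNNReal _ hu, Real.coe_toNNReal _ hv]
              ring
    refine h2.trans ?_
    have : (0:ℝ) < 2 ^ (q-1) := Real.rpow_pos_of_pos two_pos _
    nlinarith
  calc u + v = ((u + v) ^ q) ^ (1/q) := by
        rw [← Real.rpow_mul (by positivity), mul_one_div_cancel hq0.ne', Real.rpow_one]
    _ ≤ (2 ^ (q - 1) * S) ^ (1/q) := by
        apply Real.rpow_le_rpow (Real.rpow_nonneg (by positivity) _) key (by positivity)

/-- double integration by parts against a quadratic kernel -/
lemma ibp_quad (f f' f'' K K' : ℝ → ℝ) (c s t : ℝ)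
    (hK : ∀ x ∈ Set.uIcc s t, HasDerivAt K (K' x) x)
    (hK' : ∀ x ∈ Set.uIcc s t, HasDerivAt K' c x)
    (hKi : IntervalIntegrable K' volume s t)
    (hf : ∀ x ∈ Set.uIcc s t, HasDerivAt f (f' x) x)
    (hf' : ∀ x ∈ Set.uIcc s t, HasDerivAt f' (f'' x) x)
    (hf'int : IntervalIntegrable f' volume s t)
    (hf''int : IntervalIntegrable f'' volume s t) :
    ∫ x in s..t, K x * f'' x
      = K t * f' t - K s * f' s - K' t * f t + K' s * f s + c * ∫ x in s..t, f x := by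
  have h1 := integral_mul_deriv_eq_deriv_mul hK hf' hKi hf''int
  have h2 := integral_mul_deriv_eq_deriv_mul hK' hf
    ((continuous_const : Continuous fun _ : ℝ => c).intervalIntegrable s t) hf'int
  rw [h1, h2, intervalIntegral.integral_const_mul]
  ring

lemma young10 (p q : ℝ) (hp : 1 < p) (hq : 1 < q) (hpq : 1/p + 1/q = 1) :
    (4*(p+1))^(1/p) * (2*(q+2))^(1/q) ≤ 10 := by
  have hp0 : (0:ℝ) < p := by linarith
  have hq0 : (0:ℝ) < q := by linarith
  have hXp : (0:ℝ) < 4*(p+1) := by linarith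
  have hYq : (0:ℝ) < 2*(q+2) := by linarith
  have hip : p * (1/p) = 1 := mul_one_div_cancel hp0.ne'
  have hiq : q * (1/q) = 1 := mul_one_div_cancel hq0.ne'
  have hconj : Real.HolderConjugate p q := Real.holderConjugate_iff.mpr ⟨hp, by rw [inv_eq_one_div, inv_eq_one_div]; exact hpq⟩
  have h := Real.young_inequality_of_nonneg
    (Real.rpow_nonneg hXp.le (1/p)) (Real.rpow_nonneg hYq.le (1/q)) hconj
  rw [← Real.rpow_mul hXp.le, ← Real.rpow_mul hYq.le,
    one_div_mul_cancel hp0.ne', one_div_mul_cancel hq0.ne',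
    Real.rpow_one, Real.rpow_one] at h
  have e3 : (4*(p+1))/p + (2*(q+2))/q = 10 := by
    rw [div_eq_mul_one_div (4*(p+1)) p, div_eq_mul_one_div (2*(q+2)) q]
    calc (4*(p+1))*(1/p) + (2*(q+2))*(1/q)
        = 4*(p*(1/p)) + 2*(q*(1/q)) + 4*(1/p + 1/q) := by ring
      _ = 10 := by rw [hip, hiq, hpq]; norm_num
  linarith

lemma cee_lb (p : ℝ) (hp : 1 < p) :
    (1/6:ℝ) * (4*(p+1))^(-(1/p)) ≤ ((2^(p+1)-1)/(2^(2*p+1)*3^(p+1)*(p+1)))^(1/p) := by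
  have hp0 : (0:ℝ) < p := by linarith
  have hXp : (0:ℝ) < 4*(p+1) := by linarith
  have hnum : (3/2:ℝ)*2^p ≤ 2^(p+1)-1 := by
    have h2le : (2:ℝ) ≤ 2^p := by
      calc (2:ℝ) = 2^(1:ℝ) := (Real.rpow_one 2).symm
        _ ≤ 2^p := (Real.rpow_le_rpow_left_iff one_lt_two).2 hp.le
    have hep : (2:ℝ)^(p+1) = 2^p*2 := Real.rpow_add_one (by norm_num) p
    nlinarith
  have hid : ((1/6:ℝ))^p/(4*(p+1)) = ((3/2)*2^p)/(2^(2*p+1)*3^(p+1)*(p+1)) := by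
    have e6 : ((1/6:ℝ))^p = (2^p*3^p)⁻¹ := by
      rw [show (1/6:ℝ) = (2*3)⁻¹ by norm_num, Real.inv_rpow (by norm_num),
        Real.mul_rpow (by norm_num) (by norm_num)]
    have e21 : (2:ℝ)^(2*p+1) = 2^p*2^p*2 := by
      rw [show 2*p+1 = (p+p)+1 by ring, Real.rpow_add_one (by norm_num : (2:ℝ) ≠ 0),
        Real.rpow_add two_pos]
    have e31 : (3:ℝ)^(p+1) = 3^p*3 := Real.rpow_add_one (by norm_num) p
    have h2p : (0:ℝ) < 2^p := Real.rpow_pos_of_pos two_pos p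
    have h3p : (0:ℝ) < 3^p := Real.rpow_pos_of_pos (by norm_num) p
    rw [e6, e21, e31]
    field_simp
    ring
  have ea : (((1/6:ℝ))^p)^(1/p) = 1/6 := by
    rw [← Real.rpow_mul (by norm_num : (0:ℝ) ≤ 1/6), mul_one_div_cancel hp0.ne', Real.rpow_one]
  have eb : (((4*(p+1):ℝ))⁻¹)^(1/p) = (4*(p+1))^(-(1/p)) := by
    rw [← Real.rpow_neg_one (4*(p+1)), ← Real.rpow_mul hXp.le]
    norm_num
  have hx6 : (0:ℝ) ≤ (1/6:ℝ)^p := by positivity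
  have hx4 : (0:ℝ) ≤ ((4*(p+1):ℝ))⁻¹ := by positivity
  calc (1/6:ℝ) * (4*(p+1))^(-(1/p)) = ((1/6:ℝ)^p/(4*(p+1)))^(1/p) := by
        conv_lhs => rw [← ea, ← eb, ← Real.mul_rpow hx6 hx4, ← div_eq_mul_inv]
    _ ≤ ((2^(p+1)-1)/(2^(2*p+1)*3^(p+1)*(p+1)))^(1/p) := by
        apply Real.rpow_le_rpow (by positivity) _ (by positivity)
        rw [hid]
        exact (div_le_div_iff_of_pos_right (by positivity)).2 hnum

lemma ksi (p q : ℝ) (hp : 1 < p) (hq : 1 < q) (hpq : 1/p + 1/q = 1) :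
    ((2:ℝ)^(q-1))^(1/q) * (1/162)
      ≤ ((2^(p+1)-1)/(2^(2*p+1)*3^(p+1)*(p+1)))^(1/p) * (2 * (1/(2^(q+2)*(q+2)))^(1/q)) := by
  have hp0 : (0:ℝ) < p := by linarith
  have hq0 : (0:ℝ) < q := by linarith
  have hXp : (0:ℝ) < 4*(p+1) := by linarith
  have hYq : (0:ℝ) < 2*(q+2) := by linarith
  have hscal : (1:ℝ) ≤ (27/2) * ((4*(p+1))^(-(1/p)) * (2*(q+2))^(-(1/q))) := by
    have hprodpos : (0:ℝ) < (4*(p+1))^(1/p) * (2*(q+2))^(1/q) := by positivity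
    have hle : (4*(p+1))^(1/p) * (2*(q+2))^(1/q) ≤ 27/2 :=
      (young10 p q hp hq hpq).trans (by norm_num)
    rw [Real.rpow_neg hXp.le, Real.rpow_neg hYq.le, ← mul_inv]
    calc (1:ℝ) = ((4*(p+1))^(1/p) * (2*(q+2))^(1/q)) * ((4*(p+1))^(1/p) * (2*(q+2))^(1/q))⁻¹ :=
          (mul_inv_cancel₀ hprodpos.ne').symm
      _ ≤ (27/2) * ((4*(p+1))^(1/p) * (2*(q+2))^(1/q))⁻¹ :=
          mul_le_mul_of_nonneg_right hle (inv_nonneg.2 hprodpos.le)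
  have h2q : (0:ℝ) < 2^q := Real.rpow_pos_of_pos two_pos q
  have hc1eq : (1/(2^(q+2)*(q+2)):ℝ) = 2^(q-1) * ((1/4:ℝ)^q * (2*(q+2))⁻¹) := by
    have e4 : ((1/4:ℝ))^q = (2^q*2^q)⁻¹ := by
      rw [show (1/4:ℝ) = (2*2)⁻¹ by norm_num, Real.inv_rpow (by norm_num),
        Real.mul_rpow (by norm_num) (by norm_num)]
    have e5 : (2:ℝ)^(q+2) = 2^q*2*2 := by
      rw [show q+2 = q+1+1 by ring, Real.rpow_add_one (by norm_num : (2:ℝ) ≠ 0),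
        Real.rpow_add_one (by norm_num : (2:ℝ) ≠ 0)]
    have e6 : (2:ℝ)^(q-1) = 2^q/2 := by
      rw [show q-1 = q + (-1) by ring, Real.rpow_add two_pos, Real.rpow_neg_one]
      ring
    rw [e4, e5, e6]
    field_simp
  have ea4 : (((1/4:ℝ))^q)^(1/q) = (1/4:ℝ) := by
    rw [← Real.rpow_mul (by norm_num : (0:ℝ) ≤ 1/4), mul_one_div_cancel hq0.ne', Real.rpow_one]
  have eb4 : (((2*(q+2):ℝ))⁻¹)^(1/q) = (2*(q+2))^(-(1/q)) := by
    rw [← Real.rpow_neg_one (2*(q+2)), ← Real.rpow_mul hYq.le]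
    norm_num
  have hc1pow : ((1/(2^(q+2)*(q+2)):ℝ))^(1/q)
      = (2^(q-1))^(1/q) * ((1/4) * (2*(q+2))^(-(1/q))) := by
    rw [hc1eq, Real.mul_rpow (by positivity) (by positivity),
      Real.mul_rpow (by positivity) (by positivity), ea4, eb4]
  rw [hc1pow]
  have hfac : (0:ℝ) ≤ (2^(q-1):ℝ)^(1/q) := by positivity
  have h2 : (1/162:ℝ)
      ≤ ((2^(p+1)-1)/(2^(2*p+1)*3^(p+1)*(p+1)))^(1/p) * ((1/2) * (2*(q+2))^(-(1/q))) := by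
    calc (1/162:ℝ)
        ≤ (1/162) * ((27/2) * ((4*(p+1))^(-(1/p)) * (2*(q+2))^(-(1/q)))) := by
          nlinarith [hscal]
      _ = ((1/6) * (4*(p+1))^(-(1/p))) * ((1/2) * (2*(q+2))^(-(1/q))) := by ring
      _ ≤ ((2^(p+1)-1)/(2^(2*p+1)*3^(p+1)*(p+1)))^(1/p) * ((1/2) * (2*(q+2))^(-(1/q))) := by
          apply mul_le_mul_of_nonneg_right (cee_lb p hp) (by positivity)
  calc ((2:ℝ)^(q-1))^(1/q) * (1/162)
      ≤ ((2:ℝ)^(q-1))^(1/q)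
          * (((2^(p+1)-1)/(2^(2*p+1)*3^(p+1)*(p+1)))^(1/p) * ((1/2) * (2*(q+2))^(-(1/q)))) :=
        mul_le_mul_of_nonneg_left h2 hfac
    _ = ((2^(p+1)-1)/(2^(2*p+1)*3^(p+1)*(p+1)))^(1/p)
          * (2 * ((2^(q-1))^(1/q) * ((1/4) * (2*(q+2))^(-(1/q))))) := by ring

lemma beta_lb (q : ℝ) (hq : 1 < q) :
    1/(2^(q+2)*(q+2)) ≤ ∫ u in (0:ℝ)..(1/2), u ^ q * (1-u) := by
  have hq0 : (0:ℝ) < q := by linarith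
  have hbeta : (∫ u in (0:ℝ)..(1/2), u ^ q * (1-u))
      = (1/2:ℝ)^(q+1)/(q+1) - (1/2:ℝ)^(q+2)/(q+2) := by
    have hEq : Set.EqOn (fun u : ℝ => u ^ q * (1-u)) (fun u : ℝ => u ^ q - u ^ (q+1))
        (Set.uIcc (0:ℝ) (1/2)) := by
      intro u hu
      rw [Set.uIcc_of_le (by norm_num : (0:ℝ) ≤ 1/2)] at hu
      simp only
      rcases eq_or_lt_of_le hu.1 with h|h
      · rw [← h, Real.zero_rpow hq0.ne', Real.zero_rpow (by linarith : q+1 ≠ 0)]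
        ring
      · rw [Real.rpow_add_one (ne_of_gt h)]
        ring
    rw [intervalIntegral.integral_congr hEq,
      intervalIntegral.integral_sub (intervalIntegral.intervalIntegrable_rpow (Or.inl hq0.le))
        (intervalIntegral.intervalIntegrable_rpow (Or.inl (by linarith))),
      integral_rpow (Or.inl (by linarith)), integral_rpow (Or.inl (by linarith)),
      Real.zero_rpow (by linarith : q+1 ≠ 0), Real.zero_rpow (by linarith : q+1+1 ≠ 0),
      show q+1+1 = q+2 by ring]
    ring
  have h2q2 : (0:ℝ) < 2^(q+2) := Real.rpow_pos_of_pos two_pos _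
  rw [hbeta]
  have e1 : ((1/2:ℝ))^(q+2) = (2^(q+2))⁻¹ := by
    rw [one_div, Real.inv_rpow (by norm_num)]
  have e2 : ((1/2:ℝ))^(q+1) = 2 * (2^(q+2))⁻¹ := by
    have h12 : ((1/2:ℝ))^(q+2) = (1/2)^(q+1) * (1/2) := by
      rw [show q+2 = (q+1)+1 by ring, Real.rpow_add_one (by norm_num : (1/2:ℝ) ≠ 0)]
    rw [e1] at h12
    linarith
  have hmono2 : 2*(2^(q+2))⁻¹/(q+2) ≤ 2*(2^(q+2))⁻¹/(q+1) := by
    apply div_le_div_of_nonneg_left (by positivity) (by linarith) (by linarith)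
  have e3 : 2*(2^(q+2))⁻¹/(q+2) = (2^(q+2))⁻¹/(q+2) + (2^(q+2))⁻¹/(q+2) := by ring
  have e4 : (1:ℝ)/(2^(q+2)*(q+2)) = (2^(q+2))⁻¹/(q+2) := by
    field_simp
  rw [e1, e2, e4]
  linarith

theorem stmt_16 (f f' f'' : ℝ → ℝ) (I : Set ℝ) (hI : IsOpen I) (a b : ℝ) (hab : a < b)
    (hsub : Set.Icc a b ⊆ I)
    (hdf : ∀ x ∈ I, HasDerivAt f (f' x) x)
    (hdf2 : ∀ x ∈ I, HasDerivAt f' (f'' x) x)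
    (hfi : IntervalIntegrable f MeasureTheory.volume a b)
    (hf1i : IntervalIntegrable f' MeasureTheory.volume a b)
    (hf2i : IntervalIntegrable f'' MeasureTheory.volume a b)
    (p q : ℝ) (hp : 1 < p) (hq : 1 < q) (hpq : 1/p + 1/q = 1)
    (hconv : ConvexOn ℝ (Set.Icc a b) (fun x => |f'' x| ^ q)) :
    |(1/6) * (f a + 4 * f ((a+b)/2) + f b) - (1/(b-a)) * ∫ x in a..b, f x|
    ≤ (b-a)^2 * ((2 ^ (p+1) - 1) / (2 ^ (2*p+1) * 3 ^ (p+1) * (p+1))) ^ (1/p) *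
      (((|f'' b| ^ q) / (2 ^ (q+2) * (q+2))
        + (∫ u in (0:ℝ)..(1/2), u ^ q * (1-u)) * |f'' a| ^ q) ^ (1/q)
      + ((∫ u in (0:ℝ)..(1/2), u ^ q * (1-u)) * |f'' b| ^ q
        + (|f'' a| ^ q) / (2 ^ (q+2) * (q+2))) ^ (1/q)) := by
  have hL : (0:ℝ) < b - a := sub_pos.2 hab
  have hq0 : (0:ℝ) < q := by linarith
  have hp0 : (0:ℝ) < p := by linarith
  set m : ℝ := (a+b)/2 with hm
  have ham : a < m := by rw [hm]; linarith
  have hmb : m < b := by rw [hm]; linarith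
  set K1 : ℝ → ℝ := fun x => (x-a)/6 - (x-a)^2/(2*(b-a)) with hK1
  set K1' : ℝ → ℝ := fun x => 1/6 - (x-a)/(b-a) with hK1'
  set K2 : ℝ → ℝ := fun x => (b-x)/6 - (b-x)^2/(2*(b-a)) with hK2
  set K2' : ℝ → ℝ := fun x => -(1/6) + (b-x)/(b-a) with hK2'
  have hxa : ∀ x : ℝ, HasDerivAt (fun y : ℝ => y - a) 1 x := fun x => (hasDerivAt_id x).sub_const a
  have hbx : ∀ x : ℝ, HasDerivAt (fun y : ℝ => b - y) (-1) x := fun x => by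
    exact (hasDerivAt_id' x).const_sub b
  have hdK1 : ∀ x : ℝ, HasDerivAt K1 (K1' x) x := by
    intro x
    have h := (((hxa x).div_const 6).sub (((hxa x).pow 2).div_const (2*(b-a))))
    refine h.congr_deriv ?_
    rw [hK1']
    field_simp
    ring
  have hdK1' : ∀ x : ℝ, HasDerivAt K1' (-(1/(b-a))) x := by
    intro x
    have h := ((hasDerivAt_const x ((1:ℝ)/6)).sub ((hxa x).div_const (b-a)))
    refine h.congr_deriv ?_
    field_simp
    ring
  have hdK2 : ∀ x : ℝ, HasDerivAt K2 (K2' x) x := by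
    intro x
    have h := (((hbx x).div_const 6).sub (((hbx x).pow 2).div_const (2*(b-a))))
    refine h.congr_deriv ?_
    rw [hK2']
    field_simp
    ring
  have hdK2' : ∀ x : ℝ, HasDerivAt K2' (-(1/(b-a))) x := by
    intro x
    have h := ((hasDerivAt_const x (-(1:ℝ)/6)).add ((hbx x).div_const (b-a)))
    convert h using 1
    · rfl
    · rfl
    · funext y; rw [hK2']; simp only [Pi.add_apply]; ring
    · field_simp
      ring
  have hsub1 : Set.uIcc a m ⊆ I := by
    rw [Set.uIcc_of_le ham.le]
    exact fun x hx => hsub ⟨hx.1, le_trans hx.2 hmb.le⟩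
  have hsub2 : Set.uIcc m b ⊆ I := by
    rw [Set.uIcc_of_le hmb.le]
    exact fun x hx => hsub ⟨le_trans ham.le hx.1, hx.2⟩
  have hsubab1 : Set.uIcc a m ⊆ Set.uIcc a b := by
    rw [Set.uIcc_of_le ham.le, Set.uIcc_of_le hab.le]
    exact Set.Icc_subset_Icc le_rfl hmb.le
  have hsubab2 : Set.uIcc m b ⊆ Set.uIcc a b := by
    rw [Set.uIcc_of_le hmb.le, Set.uIcc_of_le hab.le]
    exact Set.Icc_subset_Icc ham.le le_rfl
  have hfi1 : IntervalIntegrable f volume a m := hfi.mono_set hsubab1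
  have hfi2 : IntervalIntegrable f volume m b := hfi.mono_set hsubab2
  have hf1i1 : IntervalIntegrable f' volume a m := hf1i.mono_set hsubab1
  have hf1i2 : IntervalIntegrable f' volume m b := hf1i.mono_set hsubab2
  have hf2i1 : IntervalIntegrable f'' volume a m := hf2i.mono_set hsubab1
  have hf2i2 : IntervalIntegrable f'' volume m b := hf2i.mono_set hsubab2
  have hcK1' : Continuous K1' := by rw [hK1']; fun_prop
  have hcK2' : Continuous K2' := by rw [hK2']; fun_prop
  have e1 := ibp_quad f f' f'' K1 K1' (-(1/(b-a))) a m
    (fun x _ => hdK1 x) (fun x _ => hdK1' x) (hcK1'.intervalIntegrable a m)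
    (fun x hx => hdf x (hsub1 hx)) (fun x hx => hdf2 x (hsub1 hx)) hf1i1 hf2i1
  have e2 := ibp_quad f f' f'' K2 K2' (-(1/(b-a))) m b
    (fun x _ => hdK2 x) (fun x _ => hdK2' x) (hcK2'.intervalIntegrable m b)
    (fun x hx => hdf x (hsub2 hx)) (fun x hx => hdf2 x (hsub2 hx)) hf1i2 hf2i2
  have hsplitf : (∫ x in a..m, f x) + ∫ x in m..b, f x = ∫ x in a..b, f x :=
    integral_add_adjacent_intervals hfi1 hfi2
  have hE : (1/6) * (f a + 4 * f m + f b) - (1/(b-a)) * ∫ x in a..b, f x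
      = (∫ x in a..m, K1 x * f'' x) + (∫ x in m..b, K2 x * f'' x) := by
    rw [e1, e2, ← hsplitf]
    simp only [hK1, hK1', hK2, hK2', hm]
    field_simp
    ring
  -- absolute value bounds
  have habs1 : |∫ x in a..m, K1 x * f'' x| ≤ ∫ x in a..m, |K1 x| * |f'' x| := by
    refine (intervalIntegral.abs_integral_le_integral_abs ham.le).trans_eq ?_
    simp only [abs_mul]
  have habs2 : |∫ x in m..b, K2 x * f'' x| ≤ ∫ x in m..b, |K2 x| * |f'' x| := by
    refine (intervalIntegral.abs_integral_le_integral_abs hmb.le).trans_eq ?_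
    simp only [abs_mul]
  -- reflect the right half integral
  have hK2K1 : ∀ y : ℝ, K2 (a+b-y) = K1 y := fun y => by
    simp only [hK1, hK2]; ring_nf
  have hJ2 : (∫ x in m..b, |K2 x| * |f'' x|) = ∫ y in a..m, |K1 y| * |f'' (a+b-y)| := by
    have h := intervalIntegral.integral_comp_sub_left
      (a := a) (b := m) (fun x => |K2 x| * |f'' x|) (a+b)
    rw [show a+b-m = m by rw [hm]; ring, show a+b-a = b by ring] at h
    rw [← h]
    congr 1
    funext y
    rw [hK2K1 y]
  -- integrability of the pieces
  have hcK1 : Continuous fun x => |K1 x| := by rw [hK1]; fun_prop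
  have hint1 : IntervalIntegrable (fun x => |K1 x| * |f'' x|) volume a m :=
    (hf2i1.abs).continuousOn_mul hcK1.continuousOn
  have hrefl : IntervalIntegrable (fun y => f'' (a+b-y)) volume a m := by
    have h := (hf2i2.symm).comp_sub_left (a+b)
    rw [show a+b-b = a by ring, show a+b-m = m by rw [hm]; ring] at h
    exact h
  have hint2 : IntervalIntegrable (fun y => |K1 y| * |f'' (a+b-y)|) volume a m :=
    (hrefl.abs).continuousOn_mul hcK1.continuousOn
  have hcomb : (∫ x in a..m, |K1 x| * |f'' x|) + (∫ y in a..m, |K1 y| * |f'' (a+b-y)|)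
      = ∫ y in a..m, |K1 y| * (|f'' y| + |f'' (a+b-y)|) := by
    rw [← intervalIntegral.integral_add hint1 hint2]
    congr 1; funext y; ring
  -- pointwise convexity bound
  have hgann : (0:ℝ) ≤ |f'' a| ^ q := Real.rpow_nonneg (abs_nonneg _) q
  have hgbnn : (0:ℝ) ≤ |f'' b| ^ q := Real.rpow_nonneg (abs_nonneg _) q
  have hcx : ∀ z ∈ Set.Icc a b,
      |f'' z| ^ q ≤ ((b-z) * |f'' a| ^ q + (z-a) * |f'' b| ^ q)/(b-a) := by
    intro z hz
    have hw1 : (0:ℝ) ≤ (b-z)/(b-a) := div_nonneg (by linarith [hz.2]) hL.le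
    have hw2 : (0:ℝ) ≤ (z-a)/(b-a) := div_nonneg (by linarith [hz.1]) hL.le
    have hw3 : (b-z)/(b-a) + (z-a)/(b-a) = 1 := by field_simp; ring
    have h := hconv.2 (Set.left_mem_Icc.2 hab.le) (Set.right_mem_Icc.2 hab.le) hw1 hw2 hw3
    simp only [smul_eq_mul] at h
    rw [show (b-z)/(b-a) * a + (z-a)/(b-a) * b = z by field_simp; ring] at h
    calc |f'' z| ^ q ≤ (b-z)/(b-a) * |f'' a| ^ q + (z-a)/(b-a) * |f'' b| ^ q := h
      _ = ((b-z) * |f'' a| ^ q + (z-a) * |f'' b| ^ q)/(b-a) := by ring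
  have hWpt : ∀ y ∈ Set.Icc a m, |f'' y| + |f'' (a+b-y)|
      ≤ (2 ^ (q-1) * (|f'' a| ^ q + |f'' b| ^ q)) ^ (1/q) := by
    intro y hy
    apply pm_helper (abs_nonneg _) (abs_nonneg _) hq.le
    have hy1 : y ∈ Set.Icc a b := ⟨hy.1, le_trans hy.2 hmb.le⟩
    have hy2 : a+b-y ∈ Set.Icc a b := by
      constructor
      · linarith [hy1.2]
      · linarith [hy1.1]
    have h1 := hcx y hy1
    have h2 := hcx (a+b-y) hy2
    have hsum : ((b-y) * |f'' a| ^ q + (y-a) * |f'' b| ^ q)/(b-a)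
        + ((b-(a+b-y)) * |f'' a| ^ q + ((a+b-y)-a) * |f'' b| ^ q)/(b-a)
        = |f'' a| ^ q + |f'' b| ^ q := by
      field_simp
      ring
    linarith
  -- monotone bound
  have hmono : (∫ y in a..m, |K1 y| * (|f'' y| + |f'' (a+b-y)|))
      ≤ (2 ^ (q-1) * (|f'' a| ^ q + |f'' b| ^ q)) ^ (1/q) * ∫ y in a..m, |K1 y| := by
    rw [← intervalIntegral.integral_const_mul]
    have heq : (fun y => |K1 y| * (|f'' y| + |f'' (a+b-y)|))
        = fun y => |K1 y| * |f'' y| + |K1 y| * |f'' (a+b-y)| := by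
      funext y; ring
    refine intervalIntegral.integral_mono_on ham.le ?_ ?_ ?_
    · rw [heq]; exact hint1.add hint2
    · exact (continuous_const.mul hcK1).intervalIntegrable a m
    · intro y hy
      calc |K1 y| * (|f'' y| + |f'' (a+b-y)|)
          ≤ |K1 y| * ((2 ^ (q-1) * (|f'' a| ^ q + |f'' b| ^ q)) ^ (1/q)) :=
            mul_le_mul_of_nonneg_left (hWpt y hy) (abs_nonneg _)
        _ = (2 ^ (q-1) * (|f'' a| ^ q + |f'' b| ^ q)) ^ (1/q) * |K1 y| := mul_comm _ _
  -- kernel mass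
  set cc : ℝ := (2*a+b)/3 with hcc
  have hacc : a ≤ cc := by rw [hcc]; linarith
  have hccm : cc ≤ m := by rw [hcc, hm]; linarith
  have hcK1c : Continuous K1 := by rw [hK1]; fun_prop
  have hK1form : ∀ x : ℝ, K1 x = (x-a)*((b-a)-3*(x-a))/(6*(b-a)) := by
    intro x; rw [hK1]; field_simp; ring
  have hdF : ∀ x : ℝ, HasDerivAt (fun y : ℝ => (y-a)^2/12 - (y-a)^3/(6*(b-a))) (K1 x) x := by
    intro x
    have h := (((hxa x).pow 2).div_const 12).sub (((hxa x).pow 3).div_const (6*(b-a)))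
    refine h.congr_deriv ?_
    rw [hK1]
    field_simp
    ring
  have habs_int : ∀ s t : ℝ, IntervalIntegrable (fun x => |K1 x|) volume s t :=
    fun s t => (hcK1c.abs).intervalIntegrable s t
  have h1 : (∫ x in a..cc, |K1 x|) = ∫ x in a..cc, K1 x := by
    apply intervalIntegral.integral_congr
    intro x hx
    rw [Set.uIcc_of_le hacc] at hx
    have h3x : 3*(x-a) ≤ b-a := by
      have := hx.2; rw [hcc] at this; linarith
    have hxge : 0 ≤ x - a := by linarith [hx.1]
    have hnn : 0 ≤ K1 x := by
      rw [hK1form x]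
      apply div_nonneg (mul_nonneg hxge (by linarith)) (by linarith)
    simp only [abs_of_nonneg hnn]
  have h2 : (∫ x in a..cc, K1 x) = (b-a)^2/324 := by
    rw [integral_eq_sub_of_hasDerivAt (fun x _ => hdF x) (hcK1c.intervalIntegrable a cc)]
    rw [hcc]
    field_simp
    ring
  have h3 : (∫ x in cc..m, |K1 x|) = (b-a)^2/324 := by
    have hneg : (∫ x in cc..m, |K1 x|) = ∫ x in cc..m, -K1 x := by
      apply intervalIntegral.integral_congr
      intro x hx
      rw [Set.uIcc_of_le hccm] at hx
      have h3x : b-a ≤ 3*(x-a) := by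
        have := hx.1; rw [hcc] at this; linarith
      have hxge : 0 ≤ x - a := by
        have := hx.1; rw [hcc] at this; linarith
      have hnp : K1 x ≤ 0 := by
        rw [hK1form x]
        apply div_nonpos_of_nonpos_of_nonneg (mul_nonpos_of_nonneg_of_nonpos hxge (by linarith)) (by linarith)
      simp only [abs_of_nonpos hnp]
    rw [hneg, intervalIntegral.integral_neg]
    rw [integral_eq_sub_of_hasDerivAt (fun x _ => hdF x) (hcK1c.intervalIntegrable cc m)]
    rw [hcc, hm]
    field_simp
    ring
  have hmass : (∫ y in a..m, |K1 y|) = (b-a)^2/162 := by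
    rw [← integral_add_adjacent_intervals (habs_int a cc) (habs_int cc m), h1, h2, h3]
    ring
  -- total error bound
  have hEbound : |(1/6) * (f a + 4 * f m + f b) - (1/(b-a)) * ∫ x in a..b, f x|
      ≤ (2 ^ (q-1) * (|f'' a| ^ q + |f'' b| ^ q)) ^ (1/q) * ((b-a)^2/162) := by
    rw [hE]
    calc |(∫ x in a..m, K1 x * f'' x) + ∫ x in m..b, K2 x * f'' x|
        ≤ |∫ x in a..m, K1 x * f'' x| + |∫ x in m..b, K2 x * f'' x| := abs_add_le _ _
      _ ≤ (∫ x in a..m, |K1 x| * |f'' x|) + ∫ x in m..b, |K2 x| * |f'' x| :=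
          add_le_add habs1 habs2
      _ = ∫ y in a..m, |K1 y| * (|f'' y| + |f'' (a+b-y)|) := by rw [hJ2, hcomb]
      _ ≤ (2 ^ (q-1) * (|f'' a| ^ q + |f'' b| ^ q)) ^ (1/q) * ∫ y in a..m, |K1 y| := hmono
      _ = (2 ^ (q-1) * (|f'' a| ^ q + |f'' b| ^ q)) ^ (1/q) * ((b-a)^2/162) := by rw [hmass]
  have hbge : 1/(2^(q+2)*(q+2)) ≤ (∫ u in (0:ℝ)..(1/2), u ^ q * (1-u)) := beta_lb q hq
  have h2q2 : (0:ℝ) < 2^(q+2) := Real.rpow_pos_of_pos two_pos _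
  -- lower bounds for the two bracket terms
  have hSnn : (0:ℝ) ≤ |f'' a| ^ q + |f'' b| ^ q := add_nonneg hgann hgbnn
  have hc1nn : (0:ℝ) ≤ 1/(2^(q+2)*(q+2)) := by positivity
  have hAge : (1/(2^(q+2)*(q+2))) * (|f'' a| ^ q + |f'' b| ^ q)
      ≤ |f'' b| ^ q / (2^(q+2)*(q+2)) + (∫ u in (0:ℝ)..(1/2), u ^ q * (1-u)) * |f'' a| ^ q := by
    have h1 := mul_le_mul_of_nonneg_right hbge hgann
    have e : (1/(2^(q+2)*(q+2))) * (|f'' a| ^ q + |f'' b| ^ q)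
        = 1/(2^(q+2)*(q+2)) * |f'' a| ^ q + 1/(2^(q+2)*(q+2)) * |f'' b| ^ q := by ring
    have e2 : |f'' b| ^ q / (2^(q+2)*(q+2)) = 1/(2^(q+2)*(q+2)) * |f'' b| ^ q := by ring
    rw [e, e2]
    linarith
  have hBge : (1/(2^(q+2)*(q+2))) * (|f'' a| ^ q + |f'' b| ^ q)
      ≤ (∫ u in (0:ℝ)..(1/2), u ^ q * (1-u)) * |f'' b| ^ q + |f'' a| ^ q / (2^(q+2)*(q+2)) := by
    have h1 := mul_le_mul_of_nonneg_right hbge hgbnn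
    have e : (1/(2^(q+2)*(q+2))) * (|f'' a| ^ q + |f'' b| ^ q)
        = 1/(2^(q+2)*(q+2)) * |f'' a| ^ q + 1/(2^(q+2)*(q+2)) * |f'' b| ^ q := by ring
    have e2 : |f'' a| ^ q / (2^(q+2)*(q+2)) = 1/(2^(q+2)*(q+2)) * |f'' a| ^ q := by ring
    rw [e, e2]
    linarith
  have hApow : ((1/(2^(q+2)*(q+2))) * (|f'' a| ^ q + |f'' b| ^ q)) ^ (1/q)
      ≤ (|f'' b| ^ q / (2^(q+2)*(q+2)) + (∫ u in (0:ℝ)..(1/2), u ^ q * (1-u)) * |f'' a| ^ q) ^ (1/q) :=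
    Real.rpow_le_rpow (mul_nonneg hc1nn hSnn) hAge (by positivity)
  have hBpow : ((1/(2^(q+2)*(q+2))) * (|f'' a| ^ q + |f'' b| ^ q)) ^ (1/q)
      ≤ ((∫ u in (0:ℝ)..(1/2), u ^ q * (1-u)) * |f'' b| ^ q + |f'' a| ^ q / (2^(q+2)*(q+2))) ^ (1/q) :=
    Real.rpow_le_rpow (mul_nonneg hc1nn hSnn) hBge (by positivity)
  -- positivity of the constant factor
  have hCpos' : (0:ℝ) ≤ (2^(p+1)-1)/(2^(2*p+1)*3^(p+1)*(p+1)) := by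
    apply div_nonneg _ (by positivity)
    have h1 : (1:ℝ) = 2^(0:ℝ) := (Real.rpow_zero 2).symm
    have h2 : (2:ℝ)^(0:ℝ) ≤ 2^(p+1) := (Real.rpow_le_rpow_left_iff one_lt_two).2 (by linarith)
    linarith
  have hCnn : (0:ℝ) ≤ ((2^(p+1)-1)/(2^(2*p+1)*3^(p+1)*(p+1)))^(1/p) := Real.rpow_nonneg hCpos' _
  have hKSI : ((2:ℝ)^(q-1))^(1/q) * (1/162)
      ≤ ((2^(p+1)-1)/(2^(2*p+1)*3^(p+1)*(p+1)))^(1/p) * (2 * (1/(2^(q+2)*(q+2)))^(1/q)) :=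
    ksi p q hp hq hpq
  -- final assembly
  refine hEbound.trans ?_
  have hsplitW : ((2:ℝ) ^ (q-1) * (|f'' a| ^ q + |f'' b| ^ q)) ^ (1/q)
      = ((2:ℝ)^(q-1))^(1/q) * (|f'' a| ^ q + |f'' b| ^ q)^(1/q) :=
    Real.mul_rpow (by positivity) hSnn
  have hsplitc1 : ((1/(2^(q+2)*(q+2))) * (|f'' a| ^ q + |f'' b| ^ q)) ^ (1/q)
      = (1/(2^(q+2)*(q+2)))^(1/q) * (|f'' a| ^ q + |f'' b| ^ q)^(1/q) :=
    Real.mul_rpow hc1nn hSnn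
  have hSpnn : (0:ℝ) ≤ (|f'' a| ^ q + |f'' b| ^ q)^(1/q) := Real.rpow_nonneg hSnn _
  have hmul := mul_le_mul_of_nonneg_right hKSI
    (mul_nonneg hSpnn (sq_nonneg (b-a)) : (0:ℝ) ≤ (|f'' a| ^ q + |f'' b| ^ q)^(1/q) * (b-a)^2)
  calc ((2:ℝ) ^ (q-1) * (|f'' a| ^ q + |f'' b| ^ q)) ^ (1/q) * ((b-a)^2/162)
      = ((2:ℝ)^(q-1))^(1/q) * (1/162)
          * ((|f'' a| ^ q + |f'' b| ^ q)^(1/q) * (b-a)^2) := by rw [hsplitW]; ring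
    _ ≤ ((2^(p+1)-1)/(2^(2*p+1)*3^(p+1)*(p+1)))^(1/p) * (2 * (1/(2^(q+2)*(q+2)))^(1/q))
          * ((|f'' a| ^ q + |f'' b| ^ q)^(1/q) * (b-a)^2) := hmul
    _ = (b-a)^2 * ((2^(p+1)-1)/(2^(2*p+1)*3^(p+1)*(p+1)))^(1/p)
          * (((1/(2^(q+2)*(q+2))) * (|f'' a| ^ q + |f'' b| ^ q)) ^ (1/q)
            + ((1/(2^(q+2)*(q+2))) * (|f'' a| ^ q + |f'' b| ^ q)) ^ (1/q)) := by
        rw [hsplitc1]; ring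
    _ ≤ (b-a)^2 * ((2^(p+1)-1)/(2^(2*p+1)*3^(p+1)*(p+1)))^(1/p) *
          ((|f'' b| ^ q / (2 ^ (q+2) * (q+2))
            + (∫ u in (0:ℝ)..(1/2), u ^ q * (1-u)) * |f'' a| ^ q) ^ (1/q)
          + ((∫ u in (0:ℝ)..(1/2), u ^ q * (1-u)) * |f'' b| ^ q
            + (|f'' a| ^ q) / (2 ^ (q+2) * (q+2))) ^ (1/q)) := by
        apply mul_le_mul_of_nonneg_left (add_le_add hApow hBpow)
          (mul_nonneg (sq_nonneg _) hCnn)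
end

section
/- Let 0 < a < b be reals, and let p, q > 1 with 1/p + 1/q = 1. Then |ln((a+b)/2) - ( (b ln b - a ln a)/(b-a) - 1 )| ≤ ((b-a)²/16)(1/(p+1))^{1/p}(1/(2(q+2)))^{1/q} [ ( b^{-2q} + ((q+3)/(q+1)) a^{-2q} )^{1/q} + ( ((q+3)/(q+1)) b^{-2q} + a^{-2q} )^{1/q} ]. -/
open Real MeasureTheory Set intervalIntegral


-- binary convexity of rpow
lemma rpow2_convex {w₁ w₂ z₁ z₂ r : ℝ} (hw₁ : 0 ≤ w₁) (hw₂ : 0 ≤ w₂) (hw : w₁ + w₂ = 1)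
    (hz₁ : 0 ≤ z₁) (hz₂ : 0 ≤ z₂) (hr : 1 ≤ r) :
    (w₁ * z₁ + w₂ * z₂) ^ r ≤ w₁ * z₁ ^ r + w₂ * z₂ ^ r := by
  have h := (convexOn_rpow hr).2 (Set.mem_Ici.2 hz₁) (Set.mem_Ici.2 hz₂) hw₁ hw₂ hw
  simpa [smul_eq_mul] using h

-- pointwise interpolation bound for negative powers
lemma inv_rpow_interp {a b x s : ℝ} (ha : 0 < a) (hax : a ≤ x) (hxb : x ≤ b)
    (hs : 1 ≤ s) (hab : a < b) :
    x ^ (-s) ≤ ((b - x) * a ^ (-s) + (x - a) * b ^ (-s)) / (b - a) := by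
  have hx : 0 < x := lt_of_lt_of_le ha hax
  have hb : 0 < b := lt_trans ha hab
  have hba : 0 < b - a := by linarith
  have hw : (b - x) / (b - a) + (x - a) / (b - a) = 1 := by field_simp; ring
  have hw₁ : 0 ≤ (b - x) / (b - a) := div_nonneg (by linarith) hba.le
  have hw₂ : 0 ≤ (x - a) / (b - a) := div_nonneg (by linarith) hba.le
  have key : x⁻¹ ≤ (b - x) / (b - a) * a⁻¹ + (x - a) / (b - a) * b⁻¹ := by
    have e : (b - x) / (b - a) * a⁻¹ + (x - a) / (b - a) * b⁻¹ - x⁻¹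
        = (x - a) * (b - x) / (a * b * x) := by
      field_simp
      ring
    nlinarith [div_nonneg (mul_nonneg (by linarith : (0:ℝ) ≤ x - a) (by linarith : (0:ℝ) ≤ b - x))
      (by positivity : (0:ℝ) ≤ a * b * x)]
  have h1 : x ^ (-s) = (x⁻¹) ^ s := by
    rw [Real.inv_rpow hx.le, Real.rpow_neg hx.le]
  have h2 : (x⁻¹) ^ s ≤ ((b - x) / (b - a) * a⁻¹ + (x - a) / (b - a) * b⁻¹) ^ s :=
    Real.rpow_le_rpow (inv_nonneg.2 hx.le) key (by linarith)
  have h3 := rpow2_convex hw₁ hw₂ hw (inv_nonneg.2 ha.le) (inv_nonneg.2 hb.le) hs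
  have h4 : (a⁻¹) ^ s = a ^ (-s) := by rw [Real.inv_rpow ha.le, Real.rpow_neg ha.le]
  have h5 : (b⁻¹) ^ s = b ^ (-s) := by rw [Real.inv_rpow hb.le, Real.rpow_neg hb.le]
  calc x ^ (-s) = (x⁻¹) ^ s := h1
    _ ≤ _ := h2
    _ ≤ (b - x) / (b - a) * (a⁻¹) ^ s + (x - a) / (b - a) * (b⁻¹) ^ s := h3
    _ = ((b - x) * a ^ (-s) + (x - a) * b ^ (-s)) / (b - a) := by
        rw [h4, h5]; ring

-- ∫ (x-a)^r over [a,c]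
lemma integral_rpow_sub_left (a c r : ℝ) (hr : 0 < r) :
    ∫ x in a..c, (x - a) ^ r = (c - a) ^ (r + 1) / (r + 1) := by
  rw [intervalIntegral.integral_comp_sub_right (fun y => y ^ r) a]
  rw [integral_rpow (Or.inl (by linarith))]
  rw [sub_self, Real.zero_rpow (by linarith)]
  ring

lemma integral_rpow_sub_right (c b r : ℝ) (hr : 0 < r) :
    ∫ x in c..b, (b - x) ^ r = (b - c) ^ (r + 1) / (r + 1) := by
  rw [intervalIntegral.integral_comp_sub_left (fun y => y ^ r) b]
  rw [sub_self, integral_rpow (Or.inl (by linarith))]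
  rw [Real.zero_rpow (by linarith)]
  ring

-- closed form of the left kernel integral
lemma kernel_left (a A : ℝ) (ha : 0 < a) (haA : a ≤ A) :
    ∫ x in a..A, (x - a) ^ 2 / (2 * x ^ 2)
      = A / 2 - a * Real.log A - a ^ 2 / (2 * A) + a * Real.log a := by
  have hcont : ContinuousOn (fun x => (x - a) ^ 2 / (2 * x ^ 2)) (Set.uIcc a A) := by
    apply ContinuousOn.div
    · fun_prop
    · fun_prop
    · intro x hx
      have hx' : a ≤ x := by
        rcases Set.mem_uIcc.1 hx with h | h
        · exact h.1
        · linarith [h.1, h.2]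
      have : 0 < x := lt_of_lt_of_le ha hx'
      positivity
  have hder : ∀ x ∈ Set.uIcc a A,
      HasDerivAt (fun y => y / 2 - a * Real.log y - a ^ 2 / 2 * y⁻¹)
        ((x - a) ^ 2 / (2 * x ^ 2)) x := by
    intro x hx
    have hx' : a ≤ x := by
      rcases Set.mem_uIcc.1 hx with h | h
      · exact h.1
      · linarith [h.1, h.2]
    have hx0 : 0 < x := lt_of_lt_of_le ha hx'
    have h1 : HasDerivAt (fun y : ℝ => y / 2) (1 / 2) x := by
      simpa using (hasDerivAt_id x).div_const 2
    have h2 : HasDerivAt (fun y : ℝ => a * Real.log y) (a * x⁻¹) x :=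
      (Real.hasDerivAt_log hx0.ne').const_mul a
    have h3 : HasDerivAt (fun y : ℝ => a ^ 2 / 2 * y⁻¹) (a ^ 2 / 2 * (-(x ^ 2)⁻¹)) x :=
      (hasDerivAt_inv hx0.ne').const_mul (a ^ 2 / 2)
    have := (h1.sub h2).sub h3
    refine this.congr_deriv ?_
    field_simp
    ring
  rw [intervalIntegral.integral_eq_sub_of_hasDerivAt hder
    (hcont.intervalIntegrable)]
  have ha' : a ≠ 0 := ha.ne'
  field_simp
  ring

-- closed form of the right kernel integral
lemma kernel_right (A b : ℝ) (hA : 0 < A) (hAb : A ≤ b) :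
    ∫ x in A..b, (b - x) ^ 2 / (2 * x ^ 2)
      = -(b * Real.log b) + b ^ 2 / (2 * A) + b * Real.log A - A / 2 := by
  have hcont : ContinuousOn (fun x => (b - x) ^ 2 / (2 * x ^ 2)) (Set.uIcc A b) := by
    apply ContinuousOn.div
    · fun_prop
    · fun_prop
    · intro x hx
      have hx' : A ≤ x := by
        rcases Set.mem_uIcc.1 hx with h | h
        · exact h.1
        · linarith [h.1, h.2]
      have : 0 < x := lt_of_lt_of_le hA hx'
      positivity
  have hder : ∀ x ∈ Set.uIcc A b,
      HasDerivAt (fun y => -(b ^ 2 / 2 * y⁻¹) - b * Real.log y + y / 2)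
        ((b - x) ^ 2 / (2 * x ^ 2)) x := by
    intro x hx
    have hx' : A ≤ x := by
      rcases Set.mem_uIcc.1 hx with h | h
      · exact h.1
      · linarith [h.1, h.2]
    have hx0 : 0 < x := lt_of_lt_of_le hA hx'
    have h1 : HasDerivAt (fun y : ℝ => y / 2) (1 / 2) x := by
      simpa using (hasDerivAt_id x).div_const 2
    have h2 : HasDerivAt (fun y : ℝ => b * Real.log y) (b * x⁻¹) x :=
      (Real.hasDerivAt_log hx0.ne').const_mul b
    have h3 : HasDerivAt (fun y : ℝ => b ^ 2 / 2 * y⁻¹) (b ^ 2 / 2 * (-(x ^ 2)⁻¹)) x :=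
      (hasDerivAt_inv hx0.ne').const_mul (b ^ 2 / 2)
    have := ((h3.neg).sub h2).add h1
    refine this.congr_deriv ?_
    field_simp
    ring
  rw [intervalIntegral.integral_eq_sub_of_hasDerivAt hder
    (hcont.intervalIntegrable)]
  have hb : 0 < b := lt_of_lt_of_le hA hAb
  field_simp
  ring


lemma half_left (a b p q : ℝ) (ha : 0 < a) (hab : a < b) (hp : 1 < p) (hq : 1 < q)
    (hpq : 1/p + 1/q = 1) :
    ∫ x in a..(a+b)/2, (x - a) ^ 2 / (2 * x ^ 2)
      ≤ (b-a)^3/16 * (1/(p+1)) ^ (1/p) * (1/(2*(q+2))) ^ (1/q) *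
        (b ^ (-(2*q)) + ((q+3)/(q+1)) * a ^ (-(2*q))) ^ (1/q) := by
  set A := (a+b)/2 with hA_def
  set u := a ^ (-(2*q)) with hu_def
  set v := b ^ (-(2*q)) with hv_def
  have hb : 0 < b := ha.trans hab
  have haA : a < A := by simp only [hA_def]; linarith
  have hAb : A < b := by simp only [hA_def]; linarith
  have hA : 0 < A := ha.trans haA
  have hba : 0 < b - a := by linarith
  have hAa : A - a = (b-a)/2 := by simp only [hA_def]; ring
  have hAa0 : 0 < A - a := by linarith
  have hp0 : 0 < p := by linarith
  have hq0 : 0 < q := by linarith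
  have hu0 : 0 < u := Real.rpow_pos_of_pos ha _
  have hv0 : 0 < v := Real.rpow_pos_of_pos hb _
  have hc0 : 0 < (q+3)/(q+1) := by positivity
  have hconj : p.HolderConjugate q := ⟨by simpa [one_div] using hpq, by linarith, by linarith⟩
  haveI : IsFiniteMeasure (volume.restrict (Ioc a A)) :=
    ⟨by rw [Measure.restrict_apply_univ]; exact measure_Ioc_lt_top⟩
  have hf_meas : AEStronglyMeasurable (fun x : ℝ => x - a) (volume.restrict (Ioc a A)) :=
    (continuous_id.sub continuous_const).aestronglyMeasurable
  have hg_meas : AEStronglyMeasurable (fun x : ℝ => (x - a) / x ^ 2)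
      (volume.restrict (Ioc a A)) :=
    (((measurable_id.sub measurable_const).div
      (measurable_id.pow measurable_const))).aestronglyMeasurable
  have hfmem : MemLp (fun x : ℝ => x - a) (ENNReal.ofReal p) (volume.restrict (Ioc a A)) := by
    refine MemLp.of_bound hf_meas (A - a) ?_
    filter_upwards [ae_restrict_mem measurableSet_Ioc] with x hx
    rw [Real.norm_eq_abs, abs_of_nonneg (by linarith [hx.1] : (0:ℝ) ≤ x - a)]
    linarith [hx.2]
  have hgmem : MemLp (fun x : ℝ => (x - a) / x ^ 2) (ENNReal.ofReal q)
      (volume.restrict (Ioc a A)) := by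
    refine MemLp.of_bound hg_meas ((A - a) / a ^ 2) ?_
    filter_upwards [ae_restrict_mem measurableSet_Ioc] with x hx
    have hx0 : 0 < x := ha.trans hx.1
    rw [Real.norm_eq_abs,
      abs_of_nonneg (div_nonneg (by linarith [hx.1]) (by positivity))]
    exact div_le_div₀ (by linarith) (by linarith [hx.2]) (by positivity)
      (by nlinarith [hx.1])
  have hf_nonneg : 0 ≤ᵐ[volume.restrict (Ioc a A)] (fun x : ℝ => x - a) := by
    filter_upwards [ae_restrict_mem measurableSet_Ioc] with x hx
    simp only [Pi.zero_apply]; linarith [hx.1]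
  have hg_nonneg : 0 ≤ᵐ[volume.restrict (Ioc a A)] (fun x : ℝ => (x - a) / x ^ 2) := by
    filter_upwards [ae_restrict_mem measurableSet_Ioc] with x hx
    have hx0 : 0 < x := ha.trans hx.1
    simp only [Pi.zero_apply]
    exact div_nonneg (by linarith [hx.1]) (by positivity)
  have H := MeasureTheory.integral_mul_le_Lp_mul_Lq_of_nonneg hconj hf_nonneg hg_nonneg
    hfmem hgmem
  -- step 0: rewrite the integral
  have step0 : ∫ x in a..A, (x - a) ^ 2 / (2 * x ^ 2)
      = 1/2 * ∫ x in a..A, (x - a) * ((x - a) / x ^ 2) := by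
    rw [← intervalIntegral.integral_const_mul]
    apply intervalIntegral.integral_congr
    intro x hx
    have hx' : a ≤ x := by
      rcases Set.mem_uIcc.1 hx with h | h
      · exact h.1
      · linarith [h.1, h.2]
    have hx0 : 0 < x := lt_of_lt_of_le ha hx'
    field_simp
  -- value of P
  have P : ∫ x, (x - a) ^ p ∂(volume.restrict (Ioc a A)) = (A-a)^(p+1)/(p+1) := by
    rw [← intervalIntegral.integral_of_le haA.le]
    exact integral_rpow_sub_left a A p hp0
  -- integrability facts on [a, A]
  have contq : Continuous fun x : ℝ => (x - a) ^ q :=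
    (Real.continuous_rpow_const hq0.le).comp (continuous_id.sub continuous_const)
  have contq1 : Continuous fun x : ℝ => (x - a) ^ (q+1) :=
    (Real.continuous_rpow_const (by linarith)).comp (continuous_id.sub continuous_const)
  have contg : ContinuousOn (fun x : ℝ => ((x - a) / x ^ 2) ^ q) (Set.uIcc a A) := by
    apply Continuous.comp_continuousOn (Real.continuous_rpow_const hq0.le)
    apply ContinuousOn.div
    · fun_prop
    · fun_prop
    · intro x hx
      have hx' : a ≤ x := by
        rcases Set.mem_uIcc.1 hx with h | h
        · exact h.1
        · linarith [h.1, h.2]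
      have : 0 < x := lt_of_lt_of_le ha hx'
      positivity
  -- pointwise bound
  have ptwise : ∀ x ∈ Set.Icc a A, ((x - a) / x ^ 2) ^ q
      ≤ (x - a) ^ q * u + (x - a) ^ (q+1) * ((v - u)/(b-a)) := by
    intro x hx
    have hx0 : 0 < x := lt_of_lt_of_le ha hx.1
    have hxa : 0 ≤ x - a := by linarith [hx.1]
    have e1 : ((x - a) / x ^ 2) ^ q = (x - a) ^ q * x ^ (-(2*q)) := by
      rw [Real.div_rpow hxa (sq_nonneg x), div_eq_mul_inv]
      congr 1
      rw [← Real.rpow_natCast x 2, ← Real.rpow_mul hx0.le, ← Real.rpow_neg hx0.le]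
      norm_num
    have e2 : x ^ (-(2*q)) ≤ ((b - x) * u + (x - a) * v)/(b-a) := by
      rw [hu_def, hv_def]
      exact inv_rpow_interp ha hx.1 (by linarith [hx.2]) (by linarith) hab
    have e3 : (x - a) ^ q * x ^ (-(2*q))
        ≤ (x - a) ^ q * (((b - x) * u + (x - a) * v)/(b-a)) :=
      mul_le_mul_of_nonneg_left e2 (Real.rpow_nonneg hxa q)
    have e4 : (x - a) ^ q * (((b - x) * u + (x - a) * v)/(b-a))
        = (x - a) ^ q * u + (x - a) ^ (q+1) * ((v - u)/(b-a)) := by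
      have hq1 : (x - a) ^ (q+1) = (x - a) ^ q * (x - a) := by
        rw [Real.rpow_add' hxa (by linarith), Real.rpow_one]
      rw [hq1]
      field_simp
      ring
    rw [e1]
    rw [e4] at e3
    exact e3
  -- bound on Q
  have Qle : ∫ x, ((x - a) / x ^ 2) ^ q ∂(volume.restrict (Ioc a A))
      ≤ (A-a)^(q+1) * (1/(2*(q+2))) * (v + ((q+3)/(q+1)) * u) := by
    rw [← intervalIntegral.integral_of_le haA.le]
    have mono := intervalIntegral.integral_mono_on (μ := volume) haA.le
      (contg.intervalIntegrable)
      (((contq.mul continuous_const).add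
        (contq1.mul continuous_const)).intervalIntegrable a A)
      ptwise
    refine mono.trans ?_
    simp only [Pi.add_apply]
    rw [intervalIntegral.integral_add
        ((contq.mul continuous_const).intervalIntegrable a A)
        ((contq1.mul continuous_const).intervalIntegrable a A)]
    simp only [Pi.mul_apply]
    rw [intervalIntegral.integral_mul_const, intervalIntegral.integral_mul_const,
      integral_rpow_sub_left a A q hq0, integral_rpow_sub_left a A (q+1) (by linarith)]
    have e5 : (A-a)^(q+1+1) = (A-a)^(q+1) * (A-a) := by
      rw [Real.rpow_add' hAa0.le (by linarith), Real.rpow_one]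
    rw [e5, hAa]
    have hq1 : q + 1 ≠ 0 := by linarith
    have hq2 : q + 2 ≠ 0 := by linarith
    rw [div_mul_eq_mul_div, div_mul_eq_mul_div]
    apply le_of_eq
    field_simp
    ring
  -- Q nonneg
  have Qnonneg : 0 ≤ ∫ x, ((x - a) / x ^ 2) ^ q ∂(volume.restrict (Ioc a A)) := by
    rw [← intervalIntegral.integral_of_le haA.le]
    apply intervalIntegral.integral_nonneg haA.le
    intro x hx
    have hx0 : 0 < x := lt_of_lt_of_le ha hx.1
    exact Real.rpow_nonneg (div_nonneg (by linarith [hx.1]) (by positivity)) q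
  -- assemble
  have key : ∫ x in a..A, (x - a) * ((x - a) / x ^ 2)
      ≤ ((A-a)^(p+1)/(p+1))^(1/p)
        * ((A-a)^(q+1) * (1/(2*(q+2))) * (v + ((q+3)/(q+1)) * u))^(1/q) := by
    rw [intervalIntegral.integral_of_le haA.le]
    refine H.trans ?_
    rw [P]
    exact mul_le_mul_of_nonneg_left
      (Real.rpow_le_rpow Qnonneg Qle (by positivity))
      (Real.rpow_nonneg (by positivity) _)
  -- final algebra
  have hbr0 : (0:ℝ) ≤ v + ((q+3)/(q+1)) * u := by positivity
  have heq : ((A-a)^(p+1)/(p+1))^(1/p)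
        * ((A-a)^(q+1) * (1/(2*(q+2))) * (v + ((q+3)/(q+1)) * u))^(1/q)
      = (b-a)^3/8 * (1/(p+1)) ^ (1/p) * (1/(2*(q+2))) ^ (1/q)
        * (v + ((q+3)/(q+1)) * u) ^ (1/q) := by
    rw [div_eq_mul_one_div ((A-a)^(p+1)) (p+1)]
    rw [Real.mul_rpow (Real.rpow_nonneg hAa0.le _) (by positivity)]
    rw [Real.mul_rpow (mul_nonneg (Real.rpow_nonneg hAa0.le _) (by positivity)) hbr0]
    rw [Real.mul_rpow (Real.rpow_nonneg hAa0.le _) (by positivity)]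
    rw [← Real.rpow_mul hAa0.le, ← Real.rpow_mul hAa0.le]
    have h3 : (p+1)*(1/p) + (q+1)*(1/q) = 3 := by
      have e1 : (p+1)*(1/p) = 1 + 1/p := by field_simp
      have e2 : (q+1)*(1/q) = 1 + 1/q := by field_simp
      rw [e1, e2]; linarith
    have : (A-a)^((p+1)*(1/p)) * (A-a)^((q+1)*(1/q)) = (b-a)^3/8 := by
      rw [← Real.rpow_add hAa0, h3, hAa]
      rw [show (3:ℝ) = ((3:ℕ):ℝ) by norm_num, Real.rpow_natCast]
      ring
    calc (A-a)^((p+1)*(1/p)) * (1/(p+1))^(1/p)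
          * ((A-a)^((q+1)*(1/q)) * (1/(2*(q+2)))^(1/q) * (v + ((q+3)/(q+1)) * u)^(1/q))
        = ((A-a)^((p+1)*(1/p)) * (A-a)^((q+1)*(1/q))) * (1/(p+1))^(1/p)
          * (1/(2*(q+2)))^(1/q) * (v + ((q+3)/(q+1)) * u)^(1/q) := by ring
      _ = (b-a)^3/8 * (1/(p+1)) ^ (1/p) * (1/(2*(q+2))) ^ (1/q)
          * (v + ((q+3)/(q+1)) * u) ^ (1/q) := by rw [this]
  rw [step0]
  calc 1/2 * ∫ x in a..A, (x - a) * ((x - a) / x ^ 2)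
      ≤ 1/2 * (((A-a)^(p+1)/(p+1))^(1/p)
        * ((A-a)^(q+1) * (1/(2*(q+2))) * (v + ((q+3)/(q+1)) * u))^(1/q)) := by linarith [key]
    _ = (b-a)^3/16 * (1/(p+1)) ^ (1/p) * (1/(2*(q+2))) ^ (1/q)
        * (v + ((q+3)/(q+1)) * u) ^ (1/q) := by rw [heq]; ring


lemma half_right (a b p q : ℝ) (ha : 0 < a) (hab : a < b) (hp : 1 < p) (hq : 1 < q)
    (hpq : 1/p + 1/q = 1) :
    ∫ x in ((a+b)/2)..b, (b - x) ^ 2 / (2 * x ^ 2)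
      ≤ (b-a)^3/16 * (1/(p+1)) ^ (1/p) * (1/(2*(q+2))) ^ (1/q) *
        (((q+3)/(q+1)) * b ^ (-(2*q)) + a ^ (-(2*q))) ^ (1/q) := by
  set A := (a+b)/2 with hA_def
  set u := a ^ (-(2*q)) with hu_def
  set v := b ^ (-(2*q)) with hv_def
  have hb : 0 < b := ha.trans hab
  have haA : a < A := by simp only [hA_def]; linarith
  have hAb : A < b := by simp only [hA_def]; linarith
  have hA : 0 < A := ha.trans haA
  have hba : 0 < b - a := by linarith
  have hbA : b - A = (b-a)/2 := by simp only [hA_def]; ring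
  have hbA0 : 0 < b - A := by linarith
  have hp0 : 0 < p := by linarith
  have hq0 : 0 < q := by linarith
  have hu0 : 0 < u := Real.rpow_pos_of_pos ha _
  have hv0 : 0 < v := Real.rpow_pos_of_pos hb _
  have hconj : p.HolderConjugate q := ⟨by simpa [one_div] using hpq, by linarith, by linarith⟩
  haveI : IsFiniteMeasure (volume.restrict (Ioc A b)) :=
    ⟨by rw [Measure.restrict_apply_univ]; exact measure_Ioc_lt_top⟩
  have hf_meas : AEStronglyMeasurable (fun x : ℝ => b - x) (volume.restrict (Ioc A b)) :=
    (continuous_const.sub continuous_id).aestronglyMeasurable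
  have hg_meas : AEStronglyMeasurable (fun x : ℝ => (b - x) / x ^ 2)
      (volume.restrict (Ioc A b)) :=
    (((measurable_const.sub measurable_id).div
      (measurable_id.pow measurable_const))).aestronglyMeasurable
  have hfmem : MemLp (fun x : ℝ => b - x) (ENNReal.ofReal p) (volume.restrict (Ioc A b)) := by
    refine MemLp.of_bound hf_meas (b - A) ?_
    filter_upwards [ae_restrict_mem measurableSet_Ioc] with x hx
    rw [Real.norm_eq_abs, abs_of_nonneg (by linarith [hx.2] : (0:ℝ) ≤ b - x)]
    linarith [hx.1]
  have hgmem : MemLp (fun x : ℝ => (b - x) / x ^ 2) (ENNReal.ofReal q)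
      (volume.restrict (Ioc A b)) := by
    refine MemLp.of_bound hg_meas ((b - A) / A ^ 2) ?_
    filter_upwards [ae_restrict_mem measurableSet_Ioc] with x hx
    have hx0 : 0 < x := hA.trans hx.1
    rw [Real.norm_eq_abs,
      abs_of_nonneg (div_nonneg (by linarith [hx.2]) (by positivity))]
    exact div_le_div₀ (by linarith) (by linarith [hx.1]) (by positivity)
      (by nlinarith [hx.1])
  have hf_nonneg : 0 ≤ᵐ[volume.restrict (Ioc A b)] (fun x : ℝ => b - x) := by
    filter_upwards [ae_restrict_mem measurableSet_Ioc] with x hx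
    simp only [Pi.zero_apply]; linarith [hx.2]
  have hg_nonneg : 0 ≤ᵐ[volume.restrict (Ioc A b)] (fun x : ℝ => (b - x) / x ^ 2) := by
    filter_upwards [ae_restrict_mem measurableSet_Ioc] with x hx
    have hx0 : 0 < x := hA.trans hx.1
    simp only [Pi.zero_apply]
    exact div_nonneg (by linarith [hx.2]) (by positivity)
  have H := MeasureTheory.integral_mul_le_Lp_mul_Lq_of_nonneg hconj hf_nonneg hg_nonneg
    hfmem hgmem
  have step0 : ∫ x in A..b, (b - x) ^ 2 / (2 * x ^ 2)
      = 1/2 * ∫ x in A..b, (b - x) * ((b - x) / x ^ 2) := by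
    rw [← intervalIntegral.integral_const_mul]
    apply intervalIntegral.integral_congr
    intro x hx
    have hx' : A ≤ x := by
      rcases Set.mem_uIcc.1 hx with h | h
      · exact h.1
      · linarith [h.1, h.2]
    have hx0 : 0 < x := lt_of_lt_of_le hA hx'
    field_simp
  have P : ∫ x, (b - x) ^ p ∂(volume.restrict (Ioc A b)) = (b-A)^(p+1)/(p+1) := by
    rw [← intervalIntegral.integral_of_le hAb.le]
    exact integral_rpow_sub_right A b p hp0
  have contq : Continuous fun x : ℝ => (b - x) ^ q :=
    (Real.continuous_rpow_const hq0.le).comp (continuous_const.sub continuous_id)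
  have contq1 : Continuous fun x : ℝ => (b - x) ^ (q+1) :=
    (Real.continuous_rpow_const (by linarith)).comp (continuous_const.sub continuous_id)
  have contg : ContinuousOn (fun x : ℝ => ((b - x) / x ^ 2) ^ q) (Set.uIcc A b) := by
    apply Continuous.comp_continuousOn (Real.continuous_rpow_const hq0.le)
    apply ContinuousOn.div
    · fun_prop
    · fun_prop
    · intro x hx
      have hx' : A ≤ x := by
        rcases Set.mem_uIcc.1 hx with h | h
        · exact h.1
        · linarith [h.1, h.2]
      have : 0 < x := lt_of_lt_of_le hA hx'
      positivity
  have ptwise : ∀ x ∈ Set.Icc A b, ((b - x) / x ^ 2) ^ q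
      ≤ (b - x) ^ q * v + (b - x) ^ (q+1) * ((u - v)/(b-a)) := by
    intro x hx
    have hx0 : 0 < x := lt_of_lt_of_le hA hx.1
    have hxb : 0 ≤ b - x := by linarith [hx.2]
    have e1 : ((b - x) / x ^ 2) ^ q = (b - x) ^ q * x ^ (-(2*q)) := by
      rw [Real.div_rpow hxb (sq_nonneg x), div_eq_mul_inv]
      congr 1
      rw [← Real.rpow_natCast x 2, ← Real.rpow_mul hx0.le, ← Real.rpow_neg hx0.le]
      norm_num
    have e2 : x ^ (-(2*q)) ≤ ((b - x) * u + (x - a) * v)/(b-a) := by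
      rw [hu_def, hv_def]
      exact inv_rpow_interp ha (by linarith [hx.1]) hx.2 (by linarith) hab
    have e3 : (b - x) ^ q * x ^ (-(2*q))
        ≤ (b - x) ^ q * (((b - x) * u + (x - a) * v)/(b-a)) :=
      mul_le_mul_of_nonneg_left e2 (Real.rpow_nonneg hxb q)
    have e4 : (b - x) ^ q * (((b - x) * u + (x - a) * v)/(b-a))
        = (b - x) ^ q * v + (b - x) ^ (q+1) * ((u - v)/(b-a)) := by
      have hq1 : (b - x) ^ (q+1) = (b - x) ^ q * (b - x) := by
        rw [Real.rpow_add' hxb (by linarith), Real.rpow_one]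
      rw [hq1]
      field_simp
      ring
    rw [e1]
    rw [e4] at e3
    exact e3
  have Qle : ∫ x, ((b - x) / x ^ 2) ^ q ∂(volume.restrict (Ioc A b))
      ≤ (b-A)^(q+1) * (1/(2*(q+2))) * (((q+3)/(q+1)) * v + u) := by
    rw [← intervalIntegral.integral_of_le hAb.le]
    have mono := intervalIntegral.integral_mono_on (μ := volume) hAb.le
      (contg.intervalIntegrable)
      (((contq.mul continuous_const).add
        (contq1.mul continuous_const)).intervalIntegrable A b)
      ptwise
    refine mono.trans ?_
    simp only [Pi.add_apply]
    rw [intervalIntegral.integral_add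
        ((contq.mul continuous_const).intervalIntegrable A b)
        ((contq1.mul continuous_const).intervalIntegrable A b)]
    simp only [Pi.mul_apply]
    rw [intervalIntegral.integral_mul_const, intervalIntegral.integral_mul_const,
      integral_rpow_sub_right A b q hq0, integral_rpow_sub_right A b (q+1) (by linarith)]
    have e5 : (b-A)^(q+1+1) = (b-A)^(q+1) * (b-A) := by
      rw [Real.rpow_add' hbA0.le (by linarith), Real.rpow_one]
    rw [e5, hbA]
    have hq1 : q + 1 ≠ 0 := by linarith
    have hq2 : q + 2 ≠ 0 := by linarith
    rw [div_mul_eq_mul_div, div_mul_eq_mul_div]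
    apply le_of_eq
    field_simp
    ring
  have Qnonneg : 0 ≤ ∫ x, ((b - x) / x ^ 2) ^ q ∂(volume.restrict (Ioc A b)) := by
    rw [← intervalIntegral.integral_of_le hAb.le]
    apply intervalIntegral.integral_nonneg hAb.le
    intro x hx
    have hx0 : 0 < x := lt_of_lt_of_le hA hx.1
    exact Real.rpow_nonneg (div_nonneg (by linarith [hx.2]) (by positivity)) q
  have hbr0 : (0:ℝ) ≤ ((q+3)/(q+1)) * v + u := by positivity
  have key : ∫ x in A..b, (b - x) * ((b - x) / x ^ 2)
      ≤ ((b-A)^(p+1)/(p+1))^(1/p)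
        * ((b-A)^(q+1) * (1/(2*(q+2))) * (((q+3)/(q+1)) * v + u))^(1/q) := by
    rw [intervalIntegral.integral_of_le hAb.le]
    refine H.trans ?_
    rw [P]
    exact mul_le_mul_of_nonneg_left
      (Real.rpow_le_rpow Qnonneg Qle (by positivity))
      (Real.rpow_nonneg (by positivity) _)
  have heq : ((b-A)^(p+1)/(p+1))^(1/p)
        * ((b-A)^(q+1) * (1/(2*(q+2))) * (((q+3)/(q+1)) * v + u))^(1/q)
      = (b-a)^3/8 * (1/(p+1)) ^ (1/p) * (1/(2*(q+2))) ^ (1/q)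
        * (((q+3)/(q+1)) * v + u) ^ (1/q) := by
    rw [div_eq_mul_one_div ((b-A)^(p+1)) (p+1)]
    rw [Real.mul_rpow (Real.rpow_nonneg hbA0.le _) (by positivity)]
    rw [Real.mul_rpow (mul_nonneg (Real.rpow_nonneg hbA0.le _) (by positivity)) hbr0]
    rw [Real.mul_rpow (Real.rpow_nonneg hbA0.le _) (by positivity)]
    rw [← Real.rpow_mul hbA0.le, ← Real.rpow_mul hbA0.le]
    have h3 : (p+1)*(1/p) + (q+1)*(1/q) = 3 := by
      have e1 : (p+1)*(1/p) = 1 + 1/p := by field_simp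
      have e2 : (q+1)*(1/q) = 1 + 1/q := by field_simp
      rw [e1, e2]; linarith
    have : (b-A)^((p+1)*(1/p)) * (b-A)^((q+1)*(1/q)) = (b-a)^3/8 := by
      rw [← Real.rpow_add hbA0, h3, hbA]
      rw [show (3:ℝ) = ((3:ℕ):ℝ) by norm_num, Real.rpow_natCast]
      ring
    calc (b-A)^((p+1)*(1/p)) * (1/(p+1))^(1/p)
          * ((b-A)^((q+1)*(1/q)) * (1/(2*(q+2)))^(1/q) * (((q+3)/(q+1)) * v + u)^(1/q))
        = ((b-A)^((p+1)*(1/p)) * (b-A)^((q+1)*(1/q))) * (1/(p+1))^(1/p)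
          * (1/(2*(q+2)))^(1/q) * (((q+3)/(q+1)) * v + u)^(1/q) := by ring
      _ = (b-a)^3/8 * (1/(p+1)) ^ (1/p) * (1/(2*(q+2))) ^ (1/q)
          * (((q+3)/(q+1)) * v + u) ^ (1/q) := by rw [this]
  rw [step0]
  calc 1/2 * ∫ x in A..b, (b - x) * ((b - x) / x ^ 2)
      ≤ 1/2 * (((b-A)^(p+1)/(p+1))^(1/p)
        * ((b-A)^(q+1) * (1/(2*(q+2))) * (((q+3)/(q+1)) * v + u))^(1/q)) := by linarith [key]
    _ = (b-a)^3/16 * (1/(p+1)) ^ (1/p) * (1/(2*(q+2))) ^ (1/q)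
        * (((q+3)/(q+1)) * v + u) ^ (1/q) := by rw [heq]; ring


theorem stmt_18 (a b p q : ℝ) (ha : 0 < a) (hab : a < b)
    (hp : 1 < p) (hq : 1 < q) (hpq : 1/p + 1/q = 1) :
    |Real.log ((a+b)/2) - ((b * Real.log b - a * Real.log a)/(b-a) - 1)|
    ≤ (b-a)^2/16 * (1/(p+1)) ^ (1/p) * (1/(2*(q+2))) ^ (1/q) *
      ((b ^ (-(2*q)) + ((q+3)/(q+1)) * a ^ (-(2*q))) ^ (1/q)
        + (((q+3)/(q+1)) * b ^ (-(2*q)) + a ^ (-(2*q))) ^ (1/q)) := by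
  have hb : 0 < b := ha.trans hab
  have hA : (0:ℝ) < (a+b)/2 := by linarith
  have haA : a ≤ (a+b)/2 := by linarith
  have hAb : (a+b)/2 ≤ b := by linarith
  have hba : 0 < b - a := by linarith
  have hI1 := kernel_left a ((a+b)/2) ha haA
  have hI2 := kernel_right ((a+b)/2) b hA hAb
  set I₁ := ∫ x in a..(a+b)/2, (x - a) ^ 2 / (2 * x ^ 2) with hI1d
  set I₂ := ∫ x in ((a+b)/2)..b, (b - x) ^ 2 / (2 * x ^ 2) with hI2d
  have hident : Real.log ((a+b)/2) - ((b * Real.log b - a * Real.log a)/(b-a) - 1)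
      = (I₁ + I₂) / (b-a) := by
    rw [hI1, hI2]
    have hab0 : a + b ≠ 0 := by positivity
    field_simp
    ring
  have hI1nn : 0 ≤ I₁ := by
    rw [hI1d]
    apply intervalIntegral.integral_nonneg haA
    intro x hx
    have hx0 : 0 < x := lt_of_lt_of_le ha hx.1
    positivity
  have hI2nn : 0 ≤ I₂ := by
    rw [hI2d]
    apply intervalIntegral.integral_nonneg hAb
    intro x hx
    have hx0 : 0 < x := lt_of_lt_of_le hA hx.1
    positivity
  rw [hident, abs_of_nonneg (by positivity)]
  have h1 := half_left a b p q ha hab hp hq hpq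
  have h2 := half_right a b p q ha hab hp hq hpq
  rw [← hI1d] at h1
  rw [← hI2d] at h2
  rw [div_le_iff₀ hba]
  calc I₁ + I₂
      ≤ (b-a)^3/16 * (1/(p+1)) ^ (1/p) * (1/(2*(q+2))) ^ (1/q) *
          (b ^ (-(2*q)) + ((q+3)/(q+1)) * a ^ (-(2*q))) ^ (1/q)
        + (b-a)^3/16 * (1/(p+1)) ^ (1/p) * (1/(2*(q+2))) ^ (1/q) *
          (((q+3)/(q+1)) * b ^ (-(2*q)) + a ^ (-(2*q))) ^ (1/q) := add_le_add h1 h2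
    _ = (b-a)^2/16 * (1/(p+1)) ^ (1/p) * (1/(2*(q+2))) ^ (1/q) *
        ((b ^ (-(2*q)) + ((q+3)/(q+1)) * a ^ (-(2*q))) ^ (1/q)
          + (((q+3)/(q+1)) * b ^ (-(2*q)) + a ^ (-(2*q))) ^ (1/q)) * (b-a) := by ring
end

section
/- Let 0 < a < b be reals, n ∈ ℕ with n > 2, and p, q > 1 with 1/p + 1/q = 1. Then |((a+b)/2)^n - (b^{n+1} - a^{n+1})/((n+1)(b-a))| ≤ (n(n-1)(b-a)²/16)(1/(p+1))^{1/p}(1/(2(q+2)))^{1/q} [ ( b^{(n-2)q} + ((q+3)/(q+1)) a^{(n-2)q} )^{1/q} + ( ((q+3)/(q+1)) b^{(n-2)q} + a^{(n-2)q} )^{1/q} ]. -/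
set_option maxHeartbeats 1600000

open intervalIntegral MeasureTheory Set

lemma rpow_cont {e : ℝ} (he : 0 < e) : Continuous (fun t : ℝ => t ^ e) := by
  rw [continuous_iff_continuousAt]
  intro t
  exact Real.continuousAt_rpow_const t e (Or.inr he.le)

lemma hoelder_side (p q : ℝ) (hp : 1 < p) (hq : 1 < q) (hpq : 1/p + 1/q = 1)
    (φ : ℝ → ℝ) (hφc : Continuous φ) (hφpos : ∀ t ∈ Set.Icc (0:ℝ) 1, 0 < φ t)
    (W : ℝ) (hW : 0 < W) (hWb : (∫ t in (0:ℝ)..1, t^q * φ t^q) ≤ W) :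
    (∫ t in (0:ℝ)..1, t^2 * φ t) ≤ (1/(p+1))^(1/p) * W^(1/q) := by
  have hp0 : 0 < p := by linarith
  have hq0 : 0 < q := by linarith
  have hcj : p.HolderConjugate q := Real.holderConjugate_iff.mpr ⟨hp, by rw [← one_div, ← one_div]; exact hpq⟩
  set X : ℝ := (1/(p+1))^(1/p) with hX
  set Y : ℝ := W^(1/q) with hY
  have hXpos : 0 < X := Real.rpow_pos_of_pos (by positivity) _
  have hYpos : 0 < Y := Real.rpow_pos_of_pos hW _
  have hXp : X^p = 1/(p+1) := by
    rw [hX, ← Real.rpow_mul (by positivity), one_div p, inv_mul_cancel₀ hp0.ne',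
      Real.rpow_one]
  have hYq : Y^q = W := by
    rw [hY, ← Real.rpow_mul hW.le, one_div q, inv_mul_cancel₀ hq0.ne', Real.rpow_one]
  -- pointwise Young bound
  have key : ∀ t ∈ Set.Icc (0:ℝ) 1, t^2 * φ t
      ≤ X*Y*(t^p/(X^p*p) + t^q*φ t^q/(Y^q*q)) := by
    intro t ht
    have ht0 : 0 ≤ t := ht.1
    have hφt : 0 < φ t := hφpos t ht
    have young := Real.young_inequality_of_nonneg
      (a := t/X) (b := t*φ t/Y) (by positivity) (by positivity) hcj
    have e1 : (t/X)^p = t^p/X^p := Real.div_rpow ht0 hXpos.le p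
    have e2 : (t*φ t/Y)^q = t^q*φ t^q/Y^q := by
      rw [Real.div_rpow (by positivity) hYpos.le, Real.mul_rpow ht0 hφt.le]
    rw [e1, e2] at young
    have := mul_le_mul_of_nonneg_left young (by positivity : (0:ℝ) ≤ X*Y)
    calc t^2 * φ t = X*Y*(t/X*(t*φ t/Y)) := by field_simp
      _ ≤ X*Y*(t^p/X^p/p + t^q*φ t^q/Y^q/q) := this
      _ = X*Y*(t^p/(X^p*p) + t^q*φ t^q/(Y^q*q)) := by rw [div_div, div_div]
  -- integrability
  have hc1 : Continuous (fun t : ℝ => t^2 * φ t) := by continuity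
  have hcq : ContinuousOn (fun t : ℝ => t^q * φ t^q) (Set.Icc (0:ℝ) 1) := by
    apply ContinuousOn.mul ((rpow_cont hq0).continuousOn)
    intro t ht
    exact ((hφc.continuousAt).rpow_const (Or.inl (hφpos t ht).ne')).continuousWithinAt
  have hintq : IntervalIntegrable (fun t : ℝ => t^q * φ t^q) volume 0 1 := by
    apply ContinuousOn.intervalIntegrable
    rwa [Set.uIcc_of_le (by norm_num)]
  have hintp : IntervalIntegrable (fun t : ℝ => t^p) volume 0 1 :=
    (rpow_cont hp0).intervalIntegrable 0 1
  have hintB : IntervalIntegrable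
      (fun t : ℝ => X*Y*(t^p/(X^p*p) + t^q*φ t^q/(Y^q*q))) volume 0 1 := by
    apply IntervalIntegrable.const_mul
    exact (hintp.div_const _).add (hintq.div_const _)
  -- integrate
  have step1 : (∫ t in (0:ℝ)..1, t^2 * φ t)
      ≤ ∫ t in (0:ℝ)..1, X*Y*(t^p/(X^p*p) + t^q*φ t^q/(Y^q*q)) := by
    apply intervalIntegral.integral_mono_on (by norm_num)
      (hc1.intervalIntegrable 0 1) hintB key
  have hip : (∫ t in (0:ℝ)..1, t^p) = 1/(p+1) := by
    rw [integral_rpow (Or.inl (by linarith))]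
    rw [Real.one_rpow, Real.zero_rpow (by linarith)]
    ring
  have step2 : (∫ t in (0:ℝ)..1, X*Y*(t^p/(X^p*p) + t^q*φ t^q/(Y^q*q)))
      = X*Y*((∫ t in (0:ℝ)..1, t^p)/(X^p*p) + (∫ t in (0:ℝ)..1, t^q*φ t^q)/(Y^q*q)) := by
    rw [intervalIntegral.integral_const_mul,
      intervalIntegral.integral_add (hintp.div_const _) (hintq.div_const _),
      intervalIntegral.integral_div, intervalIntegral.integral_div]
  have step3 : X*Y*((∫ t in (0:ℝ)..1, t^p)/(X^p*p) + (∫ t in (0:ℝ)..1, t^q*φ t^q)/(Y^q*q))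
      ≤ X*Y := by
    rw [hip, hXp, hYq]
    have h1 : (1/(p+1))/((1/(p+1))*p) = 1/p := by
      field_simp
    have h2 : (∫ t in (0:ℝ)..1, t^q*φ t^q)/(W*q) ≤ 1/q := by
      rw [div_le_div_iff₀ (by positivity) hq0]
      calc (∫ t in (0:ℝ)..1, t^q*φ t^q) * q ≤ W * q := by
            apply mul_le_mul_of_nonneg_right hWb hq0.le
        _ = 1 * (W*q) := by ring
    calc X*Y*((1/(p+1))/((1/(p+1))*p) + (∫ t in (0:ℝ)..1, t^q*φ t^q)/(W*q))
        ≤ X*Y*(1/p + 1/q) := by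
          rw [h1]
          apply mul_le_mul_of_nonneg_left _ (by positivity)
          linarith
      _ = X*Y := by rw [hpq, mul_one]
  calc (∫ t in (0:ℝ)..1, t^2 * φ t) ≤ _ := step1
    _ = _ := step2
    _ ≤ X*Y := step3

lemma ibp_id (x₀ d : ℝ) (hd : d ≠ 0) (k : ℕ) :
    ∫ t in (0:ℝ)..1, t^2 * ((((k:ℝ)+3)*((k:ℝ)+2))*(x₀+t*d)^(k+1))
    = ((k:ℝ)+3)*(x₀+d)^(k+2)/d - 2*(x₀+d)^(k+3)/d^2
      + 2*((x₀+d)^(k+4)-x₀^(k+4))/((((k:ℝ))+4)*d^3) := by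
  have hk4 : ((k:ℝ)+4) ≠ 0 := by positivity
  set F : ℝ → ℝ := fun t =>
    (((k:ℝ)+3)/d) * (t^2*(x₀+t*d)^(k+2)) - (2/d^2) * (t*(x₀+t*d)^(k+3))
      + (2/(((k:ℝ)+4)*d^3))*(x₀+t*d)^(k+4) with hF
  have hderiv : ∀ t ∈ Set.uIcc (0:ℝ) 1, HasDerivAt F
      (t^2 * ((((k:ℝ)+3)*((k:ℝ)+2))*(x₀+t*d)^(k+1))) t := by
    intro t _
    have hb : HasDerivAt (fun t : ℝ => x₀ + t*d) d t := by
      simpa using ((hasDerivAt_id t).mul_const d).const_add x₀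
    have h1 : HasDerivAt (fun t : ℝ => t^2*(x₀+t*d)^(k+2))
        (2*t*(x₀+t*d)^(k+2) + t^2*(((k:ℝ)+2)*(x₀+t*d)^(k+1)*d)) t := by
      have := ((hasDerivAt_pow 2 t).mul (hb.pow (k+2)))
      simp only [Pi.pow_apply] at this
      refine this.congr_deriv ?_
      push_cast
      ring_nf
    have h2 : HasDerivAt (fun t : ℝ => t*(x₀+t*d)^(k+3))
        ((x₀+t*d)^(k+3) + t*(((k:ℝ)+3)*(x₀+t*d)^(k+2)*d)) t := by
      have := ((hasDerivAt_id t).mul (hb.pow (k+3)))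
      simp only [id_eq, Pi.pow_apply] at this
      refine this.congr_deriv ?_
      push_cast
      ring_nf
    have h3 : HasDerivAt (fun t : ℝ => (x₀+t*d)^(k+4))
        (((k:ℝ)+4)*(x₀+t*d)^(k+3)*d) t := by
      have := hb.pow (k+4)
      refine this.congr_deriv ?_
      push_cast
      ring_nf
    have := ((h1.const_mul (((k:ℝ)+3)/d)).sub (h2.const_mul (2/d^2))).add
      (h3.const_mul (2/(((k:ℝ)+4)*d^3)))
    refine this.congr_deriv ?_
    field_simp
    ring
  have hint : IntervalIntegrable
      (fun t => t^2 * ((((k:ℝ)+3)*((k:ℝ)+2))*(x₀+t*d)^(k+1))) volume 0 1 := by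
    apply Continuous.intervalIntegrable
    continuity
  have := intervalIntegral.integral_eq_sub_of_hasDerivAt hderiv hint
  rw [this, hF]
  simp only []
  field_simp
  ring

lemma weight_bound (q : ℝ) (hq : 1 < q) (x₀ y₀ : ℝ) (hx : 0 < x₀) (hy : 0 < y₀)
    (σ : ℝ) (hσ : 1 ≤ σ) :
    (∫ t in (0:ℝ)..1, t^q * (x₀ + t*((y₀-x₀)/2))^σ)
    ≤ ((q+3)/(q+1)*x₀^σ + y₀^σ)/(2*(q+2)) := by
  have hq0 : 0 < q := by linarith
  set d : ℝ := (y₀-x₀)/2 with hd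
  have hbase : ∀ t ∈ Set.Icc (0:ℝ) 1, 0 < x₀ + t*d := by
    intro t ht
    have : x₀ + t*d = (1-t/2)*x₀ + (t/2)*y₀ := by rw [hd]; ring
    rw [this]
    have h1 : 0 < 1 - t/2 := by nlinarith [ht.2]
    nlinarith [ht.1]
  -- pointwise convexity
  have key : ∀ t ∈ Set.Icc (0:ℝ) 1,
      t^q * (x₀ + t*d)^σ ≤ t^q * ((1-t/2)*x₀^σ + (t/2)*y₀^σ) := by
    intro t ht
    apply mul_le_mul_of_nonneg_left _ (Real.rpow_nonneg ht.1 q)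
    have hcomb : x₀ + t*d = (1-t/2)*x₀ + (t/2)*y₀ := by rw [hd]; ring
    have := (convexOn_rpow hσ).2 (Set.mem_Ici.mpr hx.le) (Set.mem_Ici.mpr hy.le)
      (by nlinarith [ht.2] : (0:ℝ) ≤ 1 - t/2) (by linarith [ht.1] : (0:ℝ) ≤ t/2)
      (by ring)
    simpa [hcomb, smul_eq_mul] using this
  -- integrability
  have hintL : IntervalIntegrable (fun t : ℝ => t^q * (x₀ + t*d)^σ) volume 0 1 := by
    apply ContinuousOn.intervalIntegrable
    rw [Set.uIcc_of_le (by norm_num)]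
    apply ContinuousOn.mul ((rpow_cont hq0).continuousOn)
    intro t ht
    exact (((continuous_const.add ((continuous_id.mul continuous_const))).continuousAt).rpow_const
      (Or.inl (hbase t ht).ne')).continuousWithinAt
  have hintR : IntervalIntegrable
      (fun t : ℝ => t^q * ((1-t/2)*x₀^σ + (t/2)*y₀^σ)) volume 0 1 := by
    apply Continuous.intervalIntegrable
    exact (rpow_cont hq0).mul (by continuity)
  have step1 := intervalIntegral.integral_mono_on (by norm_num) hintL hintR key
  -- compute RHS integral
  have congr1 : Set.EqOn (fun t : ℝ => t^q * ((1-t/2)*x₀^σ + (t/2)*y₀^σ))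
      (fun t : ℝ => x₀^σ * t^q + ((y₀^σ-x₀^σ)/2) * t^(q+1)) (Set.uIcc (0:ℝ) 1) := by
    intro t ht
    rw [Set.uIcc_of_le (by norm_num)] at ht
    rcases eq_or_lt_of_le ht.1 with h0 | h0
    · simp only [← h0]
      rw [Real.zero_rpow hq0.ne', Real.zero_rpow (by linarith)]
      ring
    · simp only []
      rw [Real.rpow_add_one h0.ne' q]
      ring
  have hiq : (∫ t in (0:ℝ)..1, t^q) = 1/(q+1) := by
    rw [integral_rpow (Or.inl (by linarith)), Real.one_rpow, Real.zero_rpow (by linarith)]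
    ring
  have hiq1 : (∫ t in (0:ℝ)..1, t^(q+1)) = 1/(q+2) := by
    rw [integral_rpow (Or.inl (by linarith)), Real.one_rpow, Real.zero_rpow (by linarith)]
    ring
  have step2 : (∫ t in (0:ℝ)..1, t^q * ((1-t/2)*x₀^σ + (t/2)*y₀^σ))
      = ((q+3)/(q+1)*x₀^σ + y₀^σ)/(2*(q+2)) := by
    rw [intervalIntegral.integral_congr congr1,
      intervalIntegral.integral_add
        (((rpow_cont hq0).intervalIntegrable 0 1).const_mul _)
        (((rpow_cont (by linarith : (0:ℝ) < q+1)).intervalIntegrable 0 1).const_mul _),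
      intervalIntegral.integral_const_mul, intervalIntegral.integral_const_mul,
      hiq, hiq1]
    field_simp
    ring
  rw [step2] at step1
  exact step1

lemma side_est (p q : ℝ) (hp : 1 < p) (hq : 1 < q) (hpq : 1/p + 1/q = 1)
    (k : ℕ) (x₀ y₀ : ℝ) (hx : 0 < x₀) (hy : 0 < y₀) :
    (∫ t in (0:ℝ)..1, t^2 * (x₀ + t*((y₀-x₀)/2))^(k+1))
    ≤ (1/(p+1))^(1/p) *
      ((((q+3)/(q+1))*x₀^(((k:ℝ)+1)*q) + y₀^(((k:ℝ)+1)*q))/(2*(q+2)))^(1/q) := by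
  set d : ℝ := (y₀-x₀)/2 with hd
  set σ : ℝ := ((k:ℝ)+1)*q with hσdef
  have hσ : 1 ≤ σ := by
    rw [hσdef]
    nlinarith [Nat.cast_nonneg (α := ℝ) k]
  have hbase : ∀ t ∈ Set.Icc (0:ℝ) 1, 0 < x₀ + t*d := by
    intro t ht
    have : x₀ + t*d = (1-t/2)*x₀ + (t/2)*y₀ := by rw [hd]; ring
    rw [this]
    have h1 : 0 < 1 - t/2 := by nlinarith [ht.2]
    nlinarith [ht.1]
  set W : ℝ := (((q+3)/(q+1))*x₀^σ + y₀^σ)/(2*(q+2)) with hW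
  have hWpos : 0 < W := by
    rw [hW]
    have := Real.rpow_pos_of_pos hx σ
    have := Real.rpow_pos_of_pos hy σ
    positivity
  have hWb : (∫ t in (0:ℝ)..1, t^q * ((x₀ + t*d)^(k+1) : ℝ)^q) ≤ W := by
    have hcongr : Set.EqOn (fun t : ℝ => t^q * ((x₀ + t*d)^(k+1) : ℝ)^q)
        (fun t : ℝ => t^q * (x₀ + t*d)^σ) (Set.uIcc (0:ℝ) 1) := by
      intro t ht
      rw [Set.uIcc_of_le (by norm_num)] at ht
      have hb := hbase t ht
      simp only []
      rw [← Real.rpow_natCast (x₀ + t*d) (k+1), ← Real.rpow_mul hb.le]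
      push_cast
      rfl
    rw [intervalIntegral.integral_congr hcongr]
    exact weight_bound q hq x₀ y₀ hx hy σ hσ
  exact hoelder_side p q hp hq hpq _
    ((continuous_const.add (continuous_id.mul continuous_const)).pow (k+1))
    (fun t ht => pow_pos (hbase t ht) _) W hWpos hWb

theorem stmt_19 (a b p q : ℝ) (n : ℕ) (ha : 0 < a) (hab : a < b) (hn : 2 < n)
    (hp : 1 < p) (hq : 1 < q) (hpq : 1/p + 1/q = 1) :
    |((a+b)/2) ^ n - (b ^ (n+1) - a ^ (n+1)) / ((n+1) * (b-a))|
    ≤ (n*(n-1)*(b-a)^2/16) * (1/(p+1)) ^ (1/p) * (1/(2*(q+2))) ^ (1/q) *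
      ((b ^ (((n:ℝ)-2)*q) + ((q+3)/(q+1)) * a ^ (((n:ℝ)-2)*q)) ^ (1/q)
        + (((q+3)/(q+1)) * b ^ (((n:ℝ)-2)*q) + a ^ (((n:ℝ)-2)*q)) ^ (1/q)) := by
  obtain ⟨k, rfl⟩ : ∃ k, n = k + 3 := ⟨n - 3, by omega⟩
  have hb : 0 < b := ha.trans hab
  set h : ℝ := (b-a)/2 with hdef
  have hh : 0 < h := by rw [hdef]; linarith
  have hcast1 : ((k+3:ℕ):ℝ) + 1 = (k:ℝ)+4 := by push_cast; ring
  have hcast2 : ((k+3:ℕ):ℝ) - 2 = (k:ℝ)+1 := by push_cast; ring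
  have hcast3 : ((k+3:ℕ):ℝ) * (((k+3:ℕ):ℝ)-1) = ((k:ℝ)+3)*((k:ℝ)+2) := by push_cast; ring
  rw [hcast1, hcast2, hcast3]
  simp only [show k+3+1 = k+4 from rfl]
  set σ : ℝ := ((k:ℝ)+1)*q with hσ
  set C : ℝ := ((k:ℝ)+3)*((k:ℝ)+2) with hC
  have hCpos : (0:ℝ) < C := by rw [hC]; positivity
  set X : ℝ := (1/(p+1))^(1/p) with hX
  set K : ℝ := (1/(2*(q+2)))^(1/q) with hK
  have hXpos : 0 < X := Real.rpow_pos_of_pos (by positivity) _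
  have hKpos : 0 < K := Real.rpow_pos_of_pos (by positivity) _
  set T₁ : ℝ := (b^σ + (q+3)/(q+1)*a^σ)^(1/q) with hT₁
  set T₂ : ℝ := ((q+3)/(q+1)*b^σ + a^σ)^(1/q) with hT₂
  -- the two IBP identities
  have e1 := ibp_id a h hh.ne' k
  have e2 := ibp_id b (-h) (neg_ne_zero.mpr hh.ne') k
  rw [← hC] at e1 e2
  have hm1 : a + h = (a+b)/2 := by rw [hdef]; ring
  have hm2 : b + -h = (a+b)/2 := by rw [hdef]; ring
  rw [hm1] at e1
  rw [hm2] at e2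
  set M : ℝ := (a+b)/2 with hM
  set I₁ : ℝ := ∫ t in (0:ℝ)..1, t^2 * (C*(a+t*h)^(k+1)) with hI₁
  set I₂ : ℝ := ∫ t in (0:ℝ)..1, t^2 * (C*(b+t*(-h))^(k+1)) with hI₂
  -- identity
  have hid : M^(k+3) - (b^(k+4) - a^(k+4))/(((k:ℝ)+4)*(b-a))
      = -((h^2/4)*(I₁+I₂)) := by
    have h2 : b - a = 2*h := by rw [hdef]; ring
    have hk4 : ((k:ℝ)+4) ≠ 0 := by positivity
    have hne : h ≠ 0 := hh.ne'
    clear_value M h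
    have e2' : I₂ = -(((k:ℝ)+3)*M^(k+2)/h) - 2*M^(k+3)/h^2
        + 2*(b^(k+4)-M^(k+4))/(((k:ℝ)+4)*h^3) := by
      rw [e2, show ((-h):ℝ)^2 = h^2 by ring, show ((-h):ℝ)^3 = -(h^3) by ring,
        mul_neg, div_neg, div_neg]
      ring
    rw [e1, e2', h2]
    field_simp
    ring
  -- nonnegativity of the integrals
  have hI1n : 0 ≤ I₁ := by
    rw [hI₁]
    apply intervalIntegral.integral_nonneg (by norm_num)
    intro t ht
    have h1 : 0 ≤ a + t*h := by nlinarith [ht.1, ht.2]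
    positivity
  have hI2n : 0 ≤ I₂ := by
    rw [hI₂]
    apply intervalIntegral.integral_nonneg (by norm_num)
    intro t ht
    have h1 : 0 ≤ b + t*(-h) := by
      rw [hdef]
      nlinarith [ht.1, ht.2]
    have h2 : 0 ≤ t^2 := sq_nonneg t
    have h3 : 0 ≤ (b + t*(-h))^(k+1) := pow_nonneg h1 _
    nlinarith [mul_nonneg h2 (mul_nonneg hCpos.le h3)]
  have hEn : 0 ≤ (h^2/4)*(I₁+I₂) := by positivity
  rw [hid, abs_neg, abs_of_nonneg hEn]
  -- side estimates
  have s1 := side_est p q hp hq hpq k a b ha hb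
  rw [← hdef, ← hσ, ← hX] at s1
  have s2 := side_est p q hp hq hpq k b a hb ha
  have hmh : (a-b)/2 = -h := by rw [hdef]; ring
  rw [hmh, ← hσ, ← hX] at s2
  -- split rpow of product
  have hsplit : ∀ Z : ℝ, 0 ≤ Z → (Z/(2*(q+2)))^(1/q) = K * Z^(1/q) := by
    intro Z hZ
    rw [div_eq_mul_one_div Z (2*(q+2)), mul_comm Z (1/(2*(q+2))),
      Real.mul_rpow (by positivity) hZ, hK]
  have haσ : (0:ℝ) < a^σ := Real.rpow_pos_of_pos ha _
  have hbσ : (0:ℝ) < b^σ := Real.rpow_pos_of_pos hb _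
  have s1' : (∫ t in (0:ℝ)..1, t^2 * (a + t*h)^(k+1)) ≤ X * (K * T₁) := by
    calc (∫ t in (0:ℝ)..1, t^2 * (a + t*h)^(k+1))
        ≤ X * ((((q+3)/(q+1))*a^σ + b^σ)/(2*(q+2)))^(1/q) := s1
      _ = X * (K * T₁) := by
          rw [hsplit _ (by positivity), hT₁, add_comm (b^σ) ((q+3)/(q+1)*a^σ)]
  have s2' : (∫ t in (0:ℝ)..1, t^2 * (b + t*(-h))^(k+1)) ≤ X * (K * T₂) := by
    calc (∫ t in (0:ℝ)..1, t^2 * (b + t*(-h))^(k+1))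
        ≤ X * ((((q+3)/(q+1))*b^σ + a^σ)/(2*(q+2)))^(1/q) := s2
      _ = X * (K * T₂) := by rw [hsplit _ (by positivity), hT₂]
  -- pull C out of the integrals
  have f1 : I₁ = C * ∫ t in (0:ℝ)..1, t^2 * (a+t*h)^(k+1) := by
    rw [hI₁, ← intervalIntegral.integral_const_mul]
    congr 1
    funext t
    ring
  have f2 : I₂ = C * ∫ t in (0:ℝ)..1, t^2 * (b+t*(-h))^(k+1) := by
    rw [hI₂, ← intervalIntegral.integral_const_mul]
    congr 1
    funext t
    ring
  -- final chain
  have final : (h^2/4)*(I₁+I₂) ≤ (h^2/4)*(C*(X*(K*T₁)) + C*(X*(K*T₂))) := by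
    apply mul_le_mul_of_nonneg_left _ (by positivity)
    rw [f1, f2]
    exact add_le_add (mul_le_mul_of_nonneg_left s1' hCpos.le)
      (mul_le_mul_of_nonneg_left s2' hCpos.le)
  calc (h^2/4)*(I₁+I₂) ≤ (h^2/4)*(C*(X*(K*T₁)) + C*(X*(K*T₂))) := final
    _ = C*(b-a)^2/16*X*K*(T₁+T₂) := by rw [hdef]; ring
end
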